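/- arXiv:1512.03294 — 2 statements merged into one kernel-verified Lean document; each statement's English description precedes it below -/
import Mathlib

section
/- Let (X,T) be a TDS which is mean sensitive, totally transitive (i.e., T^n is topologically transitive for every n ≥ 1), and contains a mean proximal pair consisting of a transitive point and a periodic point. Then (X,T) is densely mean Li-Yorke chaotic: there exist η > 0 and a dense uncountable subset K ⊂ X which is a mean Li-Yorke set with modulus η. -/
open Filter Metric Set

/-- Birkhoff average of the distance between the orbits of `x` and `y`. -/
noncomputable def birkhoffAvg {X : Type*} [PseudoMetricSpace X]
    (T : X → X) (x y : X) (N : ℕ) : ℝ :=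
  (∑ k ∈ Finset.range N, dist (T^[k] x) (T^[k] y)) / N

/-- A pair `(x,y)` is mean proximal if
`liminf_{N→∞} (1/N) ∑_{k<N} d(T^k x, T^k y) = 0`. -/
def MeanProximalPair {X : Type*} [PseudoMetricSpace X] (T : X → X) (x y : X) : Prop :=
  liminf (birkhoffAvg T x y) atTop = 0

/-- `(X,T)` is mean sensitive. -/
def MeanSensitive {X : Type*} [PseudoMetricSpace X] (T : X → X) : Prop :=
  ∃ δ > (0 : ℝ), ∀ x : X, ∀ ε > (0 : ℝ), ∃ y ∈ ball x ε,
    δ < limsup (birkhoffAvg T x y) atTop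

/-- `K` is a mean Li-Yorke set with modulus `η`. -/
def MeanLiYorkeSetMod {X : Type*} [PseudoMetricSpace X]
    (T : X → X) (η : ℝ) (K : Set X) : Prop :=
  ∀ x ∈ K, ∀ y ∈ K, x ≠ y →
    MeanProximalPair T x y ∧ η ≤ limsup (birkhoffAvg T x y) atTop





section Myc
variable {X : Type*} [MetricSpace X]

lemma lemB {W : Set (X × X)} (hWo : IsOpen W) (hWd : Dense W)
    {U V : Set X} (hU : IsOpen U) (hV : IsOpen V) (hUne : U.Nonempty) (hVne : V.Nonempty) :
    ∃ U' V' : Set X, IsOpen U' ∧ IsOpen V' ∧ U'.Nonempty ∧ V'.Nonempty ∧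
      U' ⊆ U ∧ V' ⊆ V ∧ U' ×ˢ V' ⊆ W := by
  obtain ⟨a, ha⟩ := hUne
  obtain ⟨b, hb⟩ := hVne
  have hop : IsOpen (U ×ˢ V) := hU.prod hV
  have hne : (U ×ˢ V).Nonempty := ⟨(a, b), mk_mem_prod ha hb⟩
  obtain ⟨z, hzW, hzUV⟩ := hWd.exists_mem_open hop hne
  obtain ⟨u, v, huo, hvo, hzu, hzv, huv⟩ := isOpen_prod_iff.mp hWo z.1 z.2 (by simpa using hzW)
  refine ⟨u ∩ U, v ∩ V, huo.inter hU, hvo.inter hV, ⟨z.1, hzu, hzUV.1⟩, ⟨z.2, hzv, hzUV.2⟩,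
    inter_subset_right, inter_subset_right, fun w hw => huv ⟨hw.1.1, hw.2.1⟩⟩

lemma lemC {W : Set (X × X)} (hWo : IsOpen W) (hWd : Dense W)
    (hWs : ∀ z : X × X, z ∈ W → (z.2, z.1) ∈ W) :
    ∀ (k : ℕ) (V : Fin k → Set X), (∀ i, IsOpen (V i)) → (∀ i, (V i).Nonempty) →
    (∀ i j, i ≠ j → V i ×ˢ V j ⊆ W) →
    ∀ U0 : Set X, IsOpen U0 → U0.Nonempty →
    ∃ (V0 : Set X) (V' : Fin k → Set X),
      IsOpen V0 ∧ V0.Nonempty ∧ V0 ⊆ U0 ∧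
      (∀ i, IsOpen (V' i) ∧ (V' i).Nonempty ∧ V' i ⊆ V i) ∧
      (∀ i, V0 ×ˢ V' i ⊆ W ∧ V' i ×ˢ V0 ⊆ W) := by
  intro k
  induction k with
  | zero =>
    intro V _ _ _ U0 hU0o hU0ne
    exact ⟨U0, V, hU0o, hU0ne, subset_rfl, fun i => i.elim0, fun i => i.elim0⟩
  | succ k ih =>
    intro V hVo hVne hVW U0 hU0o hU0ne
    obtain ⟨U1, V0', hU1o, hV0'o, hU1ne, hV0'ne, hU1s, hV0's, hprod⟩ :=
      lemB hWo hWd hU0o (hVo 0) hU0ne (hVne 0)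
    obtain ⟨V0'', Vt, hV0''o, hV0''ne, hV0''s, hVt, hVtW⟩ :=
      ih (V ∘ Fin.succ) (fun i => hVo _) (fun i => hVne _)
        (fun i j hij => hVW _ _ (fun h => hij (Fin.succ_injective _ h))) U1 hU1o hU1ne
    refine ⟨V0'', Fin.cons V0' Vt, hV0''o, hV0''ne, hV0''s.trans hU1s, ?_, ?_⟩
    · intro i
      refine Fin.cases ?_ (fun j => ?_) i
      · exact ⟨hV0'o, hV0'ne, by simpa using hV0's⟩
      · simpa using hVt j
    · intro i
      refine Fin.cases ?_ (fun j => ?_) i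
      · constructor
        · intro w hw
          exact hprod ⟨hV0''s hw.1, by simpa using hw.2⟩
        · intro w hw
          exact hWs (w.2, w.1) (hprod ⟨hV0''s hw.2, by simpa using hw.1⟩)
      · constructor
        · intro w hw
          exact (hVtW j).1 ⟨hw.1, by simpa using hw.2⟩
        · intro w hw
          exact (hVtW j).2 ⟨by simpa using hw.1, hw.2⟩

lemma lemA {W : Set (X × X)} (hWo : IsOpen W) (hWd : Dense W)
    (hWs : ∀ z : X × X, z ∈ W → (z.2, z.1) ∈ W) :
    ∀ (k : ℕ) (U : Fin k → Set X), (∀ i, IsOpen (U i)) → (∀ i, (U i).Nonempty) →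
    ∃ V : Fin k → Set X, (∀ i, IsOpen (V i) ∧ (V i).Nonempty ∧ V i ⊆ U i) ∧
      ∀ i j, i ≠ j → V i ×ˢ V j ⊆ W := by
  intro k
  induction k with
  | zero => intro U _ _; exact ⟨U, fun i => i.elim0, fun i => i.elim0⟩
  | succ k ih =>
    intro U hUo hUne
    obtain ⟨Vt, hVt, hVtW⟩ := ih (U ∘ Fin.succ) (fun i => hUo _) (fun i => hUne _)
    obtain ⟨V0, V', hV0o, hV0ne, hV0s, hV', hV'W⟩ :=
      lemC hWo hWd hWs k Vt (fun i => (hVt i).1) (fun i => (hVt i).2.1) hVtW (U 0) (hUo 0) (hUne 0)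
    refine ⟨Fin.cons V0 V', fun i => ?_, fun i j hij => ?_⟩
    · refine Fin.cases ?_ (fun j => ?_) i
      · exact ⟨hV0o, hV0ne, by simpa using hV0s⟩
      · have := hV' j
        exact ⟨by simpa using this.1, by simpa using this.2.1,
          by simpa using this.2.2.trans (hVt j).2.2⟩
    · rcases Fin.eq_zero_or_eq_succ i with rfl | ⟨i', rfl⟩ <;>
        rcases Fin.eq_zero_or_eq_succ j with rfl | ⟨j', rfl⟩
      · exact absurd rfl hij
      · intro w hw; exact (hV'W j').1 ⟨by simpa using hw.1, by simpa using hw.2⟩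
      · intro w hw; exact (hV'W i').2 ⟨by simpa using hw.1, by simpa using hw.2⟩
      · intro w hw
        have hij' : i' ≠ j' := fun h => hij (by rw [h])
        exact hVtW i' j' hij' ⟨(hV' i').2.2 (by simpa using hw.1), (hV' j').2.2 (by simpa using hw.2)⟩

lemma lemA' {ι : Type*} [Finite ι] {W : Set (X × X)} (hWo : IsOpen W) (hWd : Dense W)
    (hWs : ∀ z : X × X, z ∈ W → (z.2, z.1) ∈ W) (U : ι → Set X)
    (hUo : ∀ i, IsOpen (U i)) (hUne : ∀ i, (U i).Nonempty) {ε : ℝ} (hε : 0 < ε) :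
    ∃ (x : ι → X) (r : ι → ℝ), (∀ i, 0 < r i ∧ r i ≤ ε ∧ closedBall (x i) (r i) ⊆ U i) ∧
      ∀ i j, i ≠ j → closedBall (x i) (r i) ×ˢ closedBall (x j) (r j) ⊆ W := by
  obtain ⟨k, ⟨e⟩⟩ := Finite.exists_equiv_fin ι
  obtain ⟨V, hV, hVW⟩ := lemA hWo hWd hWs k (U ∘ e.symm) (fun i => hUo _) (fun i => hUne _)
  have hball : ∀ i : ι, ∃ (x : X) (r : ℝ), 0 < r ∧ r ≤ ε ∧ closedBall x r ⊆ V (e i) := by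
    intro i
    obtain ⟨x, hx⟩ := (hV (e i)).2.1
    obtain ⟨ρ, hρ, hb⟩ := Metric.isOpen_iff.mp (hV (e i)).1 x hx
    refine ⟨x, min (ρ/2) ε, lt_min (by linarith) hε, min_le_right _ _, ?_⟩
    refine (closedBall_subset_ball ?_).trans hb
    exact lt_of_le_of_lt (min_le_left _ _) (by linarith)
  choose x r hr hrε hsub using hball
  refine ⟨x, r, fun i => ⟨hr i, hrε i, (hsub i).trans ?_⟩, fun i j hij => ?_⟩
  · have := (hV (e i)).2.2
    simpa using this
  · intro w hw
    exact hVW (e i) (e j) (fun h => hij (e.injective h)) ⟨hsub i hw.1, hsub j hw.2⟩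

end Myc


section Myc2
variable {X : Type*} [MetricSpace X]

lemma finite_alive (n : ℕ) : Finite {p : ℕ × List Bool // p.1 + p.2.length = n} := by
  apply Finite.of_injective
    (fun p : {p : ℕ × List Bool // p.1 + p.2.length = n} =>
      ((⟨p.1.1, by omega⟩ : Fin (n+1)), fun k : Fin n => p.1.2.getD k false))
  rintro ⟨⟨i, s⟩, hs⟩ ⟨⟨i', s'⟩, hs'⟩ h
  simp only [Prod.mk.injEq, Fin.mk.injEq] at h
  obtain ⟨hi, hf⟩ := h
  subst hi
  simp only at hs hs'
  have hlen : s.length = s'.length := by omega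
  have hls : s = s' := by
    refine List.ext_getElem hlen (fun m h1 h2 => ?_)
    have hm : m < n := by omega
    have h5 := congrFun hf ⟨m, hm⟩
    simp only [Fin.val_mk] at h5
    rwa [List.getD_eq_getElem _ _ h1, List.getD_eq_getElem _ _ h2] at h5
  exact Subtype.ext (Prod.ext rfl hls)

/-- Configuration of the Cantor scheme at stage `n`. -/
structure MycCfg (X : Type*) [MetricSpace X] (W : Set (X × X)) (O : Set X) (n : ℕ) where
  c : ℕ × List Bool → X
  r : ℕ × List Bool → ℝ
  pos : ∀ p : ℕ × List Bool, p.1 + p.2.length = n → 0 < r p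
  small : ∀ p : ℕ × List Bool, p.1 + p.2.length = n → r p ≤ (1/2 : ℝ)^n
  root : ∀ p : ℕ × List Bool, p.1 + p.2.length = n → p.2 = [] →
    closedBall (c p) (r p) ⊆ O
  pair : ∀ p q : ℕ × List Bool, p.1 + p.2.length = n → q.1 + q.2.length = n → p ≠ q →
    closedBall (c p) (r p) ×ˢ closedBall (c q) (r q) ⊆ W

lemma myc_base {W : Set (X × X)} {O : Set X} (hOo : IsOpen O) (hOne : O.Nonempty) :
    Nonempty (MycCfg X W O 0) := by
  obtain ⟨x, hx⟩ := hOne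
  obtain ⟨ρ, hρ, hb⟩ := Metric.isOpen_iff.mp hOo x hx
  refine ⟨⟨fun _ => x, fun _ => min (ρ/2) 1, fun p _ => lt_min (by linarith) one_pos,
    fun p _ => by simpa using min_le_right (ρ/2) 1, fun p _ _ => ?_, fun p q hp hq hpq => ?_⟩⟩
  · refine (closedBall_subset_ball ?_).trans hb
    exact lt_of_le_of_lt (min_le_left _ _) (by linarith)
  · exfalso
    apply hpq
    have hp2 : p.2 = [] := by
      cases hl : p.2 with
      | nil => rfl
      | cons a l => exfalso; rw [hl] at hp; simp at hp
    have hq2 : q.2 = [] := by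
      cases hl : q.2 with
      | nil => rfl
      | cons a l => exfalso; rw [hl] at hq; simp at hq
    have : p.1 = 0 := by rw [hp2] at hp; simpa using hp
    have : q.1 = 0 := by rw [hq2] at hq; simpa using hq
    refine Prod.ext (by omega) (by rw [hp2, hq2])

lemma myc_step' {n : ℕ} {W₁ : Set (X × X)} {O₁ : Set X}
    (cfg : MycCfg X W₁ O₁ n)
    {W : Set (X × X)} (hWo : IsOpen W) (hWd : Dense W)
    (hWs : ∀ z : X × X, z ∈ W → (z.2, z.1) ∈ W)
    {O : Set X} (hOo : IsOpen O) (hOne : O.Nonempty) :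
    ∃ cfg' : MycCfg X W O (n+1),
      ∀ (i : ℕ) (s : List Bool) (b : Bool), i + s.length = n →
        closedBall (cfg'.c (i, s ++ [b])) (cfg'.r (i, s ++ [b])) ⊆
          closedBall (cfg.c (i, s)) (cfg.r (i, s)) := by
  classical
  haveI := finite_alive (n+1)
  set ι := {p : ℕ × List Bool // p.1 + p.2.length = n + 1} with hι
  have hpar : ∀ p : ι, p.1.2 ≠ [] → p.1.1 + (p.1.2.dropLast).length = n := by
    rintro ⟨⟨i, s⟩, hs⟩ hne
    have : s.length ≠ 0 := fun h => hne (List.eq_nil_of_length_eq_zero h)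
    simp only [List.length_dropLast]
    simp only at hs
    omega
  set U : ι → Set X := fun p =>
    if p.1.2 = [] then O
    else ball (cfg.c (p.1.1, p.1.2.dropLast)) (cfg.r (p.1.1, p.1.2.dropLast)) with hU
  have hUo : ∀ p, IsOpen (U p) := by
    intro p; rw [hU]; dsimp only
    split
    · exact hOo
    · exact isOpen_ball
  have hUne : ∀ p, (U p).Nonempty := by
    intro p; rw [hU]; dsimp only
    split_ifs with h
    · exact hOne
    · exact Metric.nonempty_ball.mpr (cfg.pos _ (hpar p h))
  obtain ⟨x, r, hxr, hpair⟩ := lemA' hWo hWd hWs U hUo hUne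
    (ε := (1/2 : ℝ)^(n+1)) (by positivity)
  refine ⟨⟨fun p => if h : p.1 + p.2.length = n + 1 then x ⟨p, h⟩ else cfg.c p,
           fun p => if h : p.1 + p.2.length = n + 1 then r ⟨p, h⟩ else 1,
           ?_, ?_, ?_, ?_⟩, ?_⟩
  · intro p hp; simp only [dif_pos hp]; exact (hxr ⟨p, hp⟩).1
  · intro p hp; simp only [dif_pos hp]; exact (hxr ⟨p, hp⟩).2.1
  · intro p hp hp2
    simp only [dif_pos hp]
    refine ((hxr ⟨p, hp⟩).2.2).trans ?_
    rw [hU]; dsimp only; rw [if_pos hp2]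
  · intro p q hp hq hpq
    simp only [dif_pos hp, dif_pos hq]
    exact hpair ⟨p, hp⟩ ⟨q, hq⟩ (fun h => hpq (congrArg Subtype.val h))
  · intro i s b hs
    have hc : (i, s ++ [b]).1 + (i, s ++ [b]).2.length = n + 1 := by
      simp only [List.length_append, List.length_cons, List.length_nil]
      omega
    simp only [dif_pos hc]
    refine ((hxr ⟨(i, s ++ [b]), hc⟩).2.2).trans ?_
    rw [hU]; dsimp only
    rw [if_neg (by simp)]
    rw [List.dropLast_concat]
    exact ball_subset_closedBall

end Myc2
section Myc3
variable {X : Type*} [MetricSpace X]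

lemma mycielski [CompactSpace X] [Nonempty X]
    (V : ℕ → Set (X × X)) (hVo : ∀ n, IsOpen (V n)) (hVd : ∀ n, Dense (V n))
    (hVs : ∀ n, ∀ z : X × X, z ∈ V n → (z.2, z.1) ∈ V n)
    (O : ℕ → Set X) (hOo : ∀ i, IsOpen (O i)) (hOne : ∀ i, (O i).Nonempty) :
    ∃ g : ℕ → (ℕ → Bool) → X,
      (∀ i σ, g i σ ∈ O i) ∧
      ∀ i σ i' σ', (i, σ) ≠ (i', σ') → ∀ n, (g i σ, g i' σ') ∈ V n := by
  classical
  -- the decreasing sequence of dense open sets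
  let W : ℕ → Set (X × X) := fun n => Nat.rec (V 0) (fun n Wn => Wn ∩ V (n+1)) n
  have hWsucc : ∀ n, W (n+1) = W n ∩ V (n+1) := fun n => rfl
  have hWo : ∀ n, IsOpen (W n) := by
    intro n; induction n with
    | zero => exact hVo 0
    | succ n ih => rw [hWsucc]; exact ih.inter (hVo (n+1))
  have hWd : ∀ n, Dense (W n) := by
    intro n; induction n with
    | zero => exact hVd 0
    | succ n ih => rw [hWsucc]; exact ih.inter_of_isOpen_left (hVd (n+1)) (hWo n)
  have hWs : ∀ n, ∀ z : X × X, z ∈ W n → (z.2, z.1) ∈ W n := by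
    intro n; induction n with
    | zero => exact hVs 0
    | succ n ih =>
      intro z hz
      rw [hWsucc] at hz ⊢
      exact ⟨ih z hz.1, hVs (n+1) z hz.2⟩
  have hWV : ∀ n, W n ⊆ V n := by
    intro n; cases n with
    | zero => exact subset_rfl
    | succ n => rw [hWsucc]; exact inter_subset_right
  have hWanti : ∀ m n, m ≤ n → W n ⊆ W m := by
    intro m n hmn
    induction n with
    | zero => have : m = 0 := Nat.le_zero.mp hmn; subst this; exact subset_rfl
    | succ n ih =>
      rcases Nat.lt_or_ge m (n+1) with h | h
      · exact (hWsucc n ▸ inter_subset_left).trans (ih (Nat.lt_succ_iff.mp h))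
      · have : m = n + 1 := le_antisymm hmn h
        subst this; exact subset_rfl
  -- the recursive construction
  have step : ∀ n (cfg : MycCfg X (W n) (O n) n),
      ∃ cfg' : MycCfg X (W (n+1)) (O (n+1)) (n+1),
        ∀ (i : ℕ) (s : List Bool) (b : Bool), i + s.length = n →
          closedBall (cfg'.c (i, s ++ [b])) (cfg'.r (i, s ++ [b])) ⊆
            closedBall (cfg.c (i, s)) (cfg.r (i, s)) :=
    fun n cfg => myc_step' cfg (hWo (n+1)) (hWd (n+1)) (hWs (n+1)) (hOo (n+1)) (hOne (n+1))
  obtain ⟨cfg0⟩ := myc_base (X := X) (W := W 0) (hOo 0) (hOne 0)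
  let F : ∀ n, MycCfg X (W n) (O n) n :=
    fun n => Nat.rec cfg0 (fun n cfg => Classical.choose (step n cfg)) n
  have hFsucc : ∀ n, F (n+1) = Classical.choose (step n (F n)) := fun n => rfl
  have hnest : ∀ n (i : ℕ) (s : List Bool) (b : Bool), i + s.length = n →
      closedBall ((F (n+1)).c (i, s ++ [b])) ((F (n+1)).r (i, s ++ [b])) ⊆
        closedBall ((F n).c (i, s)) ((F n).r (i, s)) := by
    intro n
    rw [hFsucc n]
    exact Classical.choose_spec (step n (F n))
  -- branches
  set str : (ℕ → Bool) → ℕ → List Bool := fun σ m => (List.range m).map σ with hstr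
  have hstrlen : ∀ σ m, (str σ m).length = m := by intro σ m; simp [hstr]
  have hstrsucc : ∀ σ m, str σ (m+1) = str σ m ++ [σ m] := by
    intro σ m; simp [hstr, List.range_succ]
  set xs : ℕ → (ℕ → Bool) → ℕ → X := fun i σ m => (F (i+m)).c (i, str σ m) with hxs
  set rs : ℕ → (ℕ → Bool) → ℕ → ℝ := fun i σ m => (F (i+m)).r (i, str σ m) with hrs
  have halive : ∀ (i : ℕ) (σ : ℕ → Bool) (m : ℕ), (i, str σ m).1 + (i, str σ m).2.length = i + m := by
    intro i σ m; simp [hstrlen]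
  have hnest2 : ∀ i σ m, closedBall (xs i σ (m+1)) (rs i σ (m+1)) ⊆ closedBall (xs i σ m) (rs i σ m) := by
    intro i σ m
    have := hnest (i+m) i (str σ m) (σ m) (halive i σ m)
    rw [hxs, hrs]
    dsimp only
    rw [hstrsucc σ m, show i + (m+1) = (i+m)+1 from rfl]
    exact this
  have hnest3 : ∀ i σ m m', m ≤ m' →
      closedBall (xs i σ m') (rs i σ m') ⊆ closedBall (xs i σ m) (rs i σ m) := by
    intro i σ m m' hmm'
    induction m' with
    | zero => have : m = 0 := Nat.le_zero.mp hmm'; subst this; exact subset_rfl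
    | succ m' ih =>
      rcases Nat.lt_or_ge m (m'+1) with h | h
      · exact (hnest2 i σ m').trans (ih (Nat.lt_succ_iff.mp h))
      · have : m = m' + 1 := le_antisymm hmm' h
        subst this; exact subset_rfl
  have hrpos : ∀ i σ m, 0 < rs i σ m := by
    intro i σ m; exact (F (i+m)).pos _ (halive i σ m)
  have hrsmall : ∀ i σ m, rs i σ m ≤ (1/2 : ℝ)^(i+m) := by
    intro i σ m; exact (F (i+m)).small _ (halive i σ m)
  have hmem : ∀ i σ m m', m ≤ m' → xs i σ m' ∈ closedBall (xs i σ m) (rs i σ m) := by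
    intro i σ m m' h
    exact hnest3 i σ m m' h (mem_closedBall_self (hrpos i σ m').le)
  have hcauchy : ∀ i σ, CauchySeq (xs i σ) := by
    intro i σ
    apply cauchySeq_of_le_geometric (1/2 : ℝ) 1 (by norm_num)
    intro m
    have h1 : xs i σ (m+1) ∈ closedBall (xs i σ m) (rs i σ m) := hmem i σ m (m+1) (Nat.le_succ m)
    have h2 : dist (xs i σ (m+1)) (xs i σ m) ≤ rs i σ m := mem_closedBall.mp h1
    have h3 : (1/2 : ℝ)^(i+m) ≤ (1/2)^m := by
      apply pow_le_pow_of_le_one (by norm_num) (by norm_num)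
      omega
    rw [dist_comm] at h2
    calc dist (xs i σ m) (xs i σ (m+1)) ≤ rs i σ m := h2
    _ ≤ (1/2 : ℝ)^(i+m) := hrsmall i σ m
    _ ≤ (1/2 : ℝ)^m := h3
    _ = 1 * (1/2 : ℝ)^m := (one_mul _).symm
  have hlim : ∀ i σ, ∃ a, Tendsto (xs i σ) atTop (nhds a) :=
    fun i σ => cauchySeq_tendsto_of_complete (hcauchy i σ)
  set g : ℕ → (ℕ → Bool) → X := fun i σ => Classical.choose (hlim i σ) with hg
  have hgt : ∀ i σ, Tendsto (xs i σ) atTop (nhds (g i σ)) :=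
    fun i σ => Classical.choose_spec (hlim i σ)
  have hgmem : ∀ i σ m, g i σ ∈ closedBall (xs i σ m) (rs i σ m) := by
    intro i σ m
    refine Metric.isClosed_closedBall.mem_of_tendsto (hgt i σ) ?_
    filter_upwards [eventually_ge_atTop m] with m' hm'
    exact hmem i σ m m' hm'
  refine ⟨g, ?_, ?_⟩
  · intro i σ
    have hroot : closedBall (xs i σ 0) (rs i σ 0) ⊆ O i := by
      have := (F (i+0)).root (i, str σ 0) (halive i σ 0) (by simp [hstr])
      simpa [hxs, hrs] using this
    exact hroot (hgmem i σ 0)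
  · intro i σ i' σ' hne n
    -- find a stage after which the two nodes are distinct
    have key : ∃ n₀, ∀ N, n₀ ≤ N → i ≤ N ∧ i' ≤ N ∧ (i, str σ (N - i)) ≠ (i', str σ' (N - i')) := by
      rcases eq_or_ne i i' with rfl | hii
      · have hσ : σ ≠ σ' := fun h => hne (by subst h; rfl)
        obtain ⟨k, hk⟩ := Function.ne_iff.mp hσ
        refine ⟨i + k + 1, fun N hN => ⟨by omega, by omega, ?_⟩⟩
        intro hcontra
        have hlists : str σ (N - i) = str σ' (N - i) := (Prod.ext_iff.mp hcontra).2
        have hklen : k < N - i := by omega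
        have : σ k = σ' k := by
          have h1 : (str σ (N-i)).getD k false = (str σ' (N-i)).getD k false := by rw [hlists]
          rw [List.getD_eq_getElem _ _ (by rw [hstrlen]; exact hklen),
              List.getD_eq_getElem _ _ (by rw [hstrlen]; exact hklen)] at h1
          simpa [hstr] using h1
        exact hk this
      · exact ⟨max i i', fun N hN => ⟨le_trans (le_max_left _ _) hN,
          le_trans (le_max_right _ _) hN, fun hcontra => hii (Prod.ext_iff.mp hcontra).1⟩⟩
    obtain ⟨n₀, hn₀⟩ := key
    set N := max n n₀ with hN
    obtain ⟨hiN, hi'N, hnodes⟩ := hn₀ N (le_max_right _ _)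
    have h1 : g i σ ∈ closedBall (xs i σ (N - i)) (rs i σ (N - i)) := hgmem i σ (N - i)
    have h2 : g i' σ' ∈ closedBall (xs i' σ' (N - i')) (rs i' σ' (N - i')) := hgmem i' σ' (N - i')
    have halive1 : (i, str σ (N-i)).1 + (i, str σ (N-i)).2.length = N := by
      simp [hstrlen]; omega
    have halive2 : (i', str σ' (N-i')).1 + (i', str σ' (N-i')).2.length = N := by
      simp [hstrlen]; omega
    have hpairN := (F N).pair _ _ halive1 halive2 hnodes
    have hin : (g i σ, g i' σ') ∈ W N := by
      apply hpairN
      constructor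
      · show g i σ ∈ closedBall ((F N).c (i, str σ (N - i))) ((F N).r (i, str σ (N - i)))
        have : i + (N - i) = N := by omega
        rw [hxs, hrs] at h1
        dsimp only at h1
        rwa [this] at h1
      · show g i' σ' ∈ closedBall ((F N).c (i', str σ' (N - i'))) ((F N).r (i', str σ' (N - i')))
        have : i' + (N - i') = N := by omega
        rw [hxs, hrs] at h2
        dsimp only at h2
        rwa [this] at h2
    exact hWV n (hWanti n N (le_max_left _ _) hin)

end Myc3

section Dyn
variable {X : Type*} [MetricSpace X] {T : X → X}

lemma avg_nonneg (T : X → X) (x y : X) (N : ℕ) : 0 ≤ birkhoffAvg T x y N :=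
  div_nonneg (Finset.sum_nonneg fun _ _ => dist_nonneg) (Nat.cast_nonneg N)

lemma avg_symm (T : X → X) (x y : X) : birkhoffAvg T x y = birkhoffAvg T y x := by
  funext N
  unfold birkhoffAvg
  congr 1
  exact Finset.sum_congr rfl fun k _ => dist_comm _ _

lemma avg_triangle (T : X → X) (x y z : X) (N : ℕ) :
    birkhoffAvg T x z N ≤ birkhoffAvg T x y N + birkhoffAvg T y z N := by
  rcases Nat.eq_zero_or_pos N with rfl | hN
  · simp [birkhoffAvg]
  · unfold birkhoffAvg
    rw [← add_div, div_le_div_iff_of_pos_right (by exact_mod_cast hN)]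
    rw [← Finset.sum_add_distrib]
    exact Finset.sum_le_sum fun k _ => dist_triangle _ _ _

lemma avg_cont (hT : Continuous T) (N : ℕ) :
    Continuous fun z : X × X => birkhoffAvg T z.1 z.2 N := by
  unfold birkhoffAvg
  apply Continuous.div_const
  exact continuous_finset_sum _ fun k _ =>
    ((hT.iterate k).comp continuous_fst).dist ((hT.iterate k).comp continuous_snd)

lemma avg_le_diam [CompactSpace X] (T : X → X) (x y : X) (N : ℕ) :
    birkhoffAvg T x y N ≤ Metric.diam (Set.univ : Set X) := by
  unfold birkhoffAvg
  rcases Nat.eq_zero_or_pos N with rfl | hN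
  · simp [Metric.diam_nonneg]
  · rw [div_le_iff₀ (by exact_mod_cast hN)]
    calc (∑ k ∈ Finset.range N, dist (T^[k] x) (T^[k] y))
        ≤ (Finset.range N).card • Metric.diam (Set.univ : Set X) :=
          Finset.sum_le_card_nsmul _ _ _ (fun k _ =>
            Metric.dist_le_diam_of_mem isCompact_univ.isBounded (Set.mem_univ _) (Set.mem_univ _))
    _ = Metric.diam (Set.univ : Set X) * N := by
          simp [nsmul_eq_mul, mul_comm]

lemma avg_bddAbove [CompactSpace X] (T : X → X) (x y : X) :
    IsBoundedUnder (· ≤ ·) atTop (birkhoffAvg T x y) :=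
  isBoundedUnder_of ⟨Metric.diam (Set.univ : Set X), fun N => avg_le_diam T x y N⟩

lemma avg_bddBelow (T : X → X) (x y : X) :
    IsBoundedUnder (· ≥ ·) atTop (birkhoffAvg T x y) :=
  isBoundedUnder_of ⟨0, fun N => avg_nonneg T x y N⟩

lemma meanProximal_of_freq [CompactSpace X] {x y : X}
    (h : ∀ ε > (0:ℝ), ∀ n : ℕ, ∃ N, n ≤ N ∧ birkhoffAvg T x y N < ε) :
    MeanProximalPair T x y := by
  have h0 : (0:ℝ) ≤ liminf (birkhoffAvg T x y) atTop :=
    le_liminf_of_le ((avg_bddAbove T x y).isCoboundedUnder_ge)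
      (Eventually.of_forall fun N => avg_nonneg T x y N)
  have h1 : ∀ ε > (0:ℝ), liminf (birkhoffAvg T x y) atTop ≤ ε := by
    intro ε hε
    refine liminf_le_of_frequently_le ?_ (avg_bddBelow T x y)
    refine frequently_atTop.mpr fun m => ?_
    obtain ⟨N, hN1, hN2⟩ := h ε hε m
    exact ⟨N, hN1, hN2.le⟩
  have h2 : liminf (birkhoffAvg T x y) atTop ≤ 0 :=
    le_of_forall_pos_le_add (fun ε hε => by simpa using h1 ε hε)
  exact le_antisymm h2 h0

lemma limsup_ge_of_freq [CompactSpace X] {x y : X} {η : ℝ}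
    (h : ∀ n : ℕ, ∃ N, n ≤ N ∧ η - 1/(n+1) < birkhoffAvg T x y N) :
    η ≤ limsup (birkhoffAvg T x y) atTop := by
  have key : ∀ ε > (0:ℝ), η - ε ≤ limsup (birkhoffAvg T x y) atTop := by
    intro ε hε
    obtain ⟨n₀, hn₀⟩ := exists_nat_one_div_lt hε
    refine le_limsup_of_frequently_le ?_ (avg_bddAbove T x y)
    refine frequently_atTop.mpr fun m => ?_
    obtain ⟨N, hN1, hN2⟩ := h (max m n₀)
    refine ⟨N, le_trans (le_max_left _ _) hN1, ?_⟩
    have hd : (1:ℝ)/(max m n₀ + 1) ≤ 1/(n₀+1) := by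
      apply one_div_le_one_div_of_le (by positivity)
      have : (n₀ : ℝ) ≤ max m n₀ := by exact_mod_cast le_max_right m n₀
      linarith
    have : η - ε < η - 1/(max m n₀ + 1) := by
      have := hd.trans_lt hn₀
      linarith
    linarith [hN2]
  refine le_of_forall_pos_le_add fun ε hε => ?_
  linarith [key ε hε]

lemma iterate_period {t : ℕ} {p : X} (htp : T^[t] p = p) (a : ℕ) : T^[a * t] p = p := by
  induction a with
  | zero => simp
  | succ a ih =>
    have : (a + 1) * t = t + a * t := by ring
    rw [this, Function.iterate_add_apply, ih, htp]

lemma mp_freq [CompactSpace X] {q p : X} {t : ℕ}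
    (htp : T^[t] p = p) (hqp : MeanProximalPair T q p) (a b : ℕ) :
    ∀ ε > (0:ℝ), ∀ n : ℕ, ∃ N, n ≤ N ∧ birkhoffAvg T (T^[a*t] q) (T^[b*t] q) N < ε := by
  intro ε hε n
  set Ssum : ℕ → ℝ := fun N => ∑ k ∈ Finset.range N, dist (T^[k] q) (T^[k] p) with hSsum
  have hSnn : ∀ N, 0 ≤ Ssum N := fun N => Finset.sum_nonneg fun _ _ => dist_nonneg
  have hSmono : ∀ {N M}, N ≤ M → Ssum N ≤ Ssum M := by
    intro N M hNM
    apply Finset.sum_le_sum_of_subset_of_nonneg (Finset.range_subset_range.mpr hNM)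
    exact fun _ _ _ => dist_nonneg
  have hshift : ∀ (s N : ℕ), (∑ k ∈ Finset.range N, dist (T^[k + s] q) (T^[k + s] p)) ≤ Ssum (N + s) := by
    intro s N
    have := Finset.sum_range_add (fun k => dist (T^[k] q) (T^[k] p)) s N
    rw [hSsum]
    simp only
    rw [add_comm N s, this]
    have h2 : (∑ k ∈ Finset.range N, dist (T^[k + s] q) (T^[k + s] p)) =
        ∑ x ∈ Finset.range N, dist (T^[s + x] q) (T^[s + x] p) := by
      exact Finset.sum_congr rfl fun k _ => by rw [add_comm]
    rw [h2]
    have h3 : 0 ≤ ∑ x ∈ Finset.range s, dist (T^[x] q) (T^[x] p) :=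
      Finset.sum_nonneg fun _ _ => dist_nonneg
    linarith
  -- pointwise bound
  have hpt : ∀ k N : ℕ, (∑ k ∈ Finset.range N, dist (T^[k] (T^[a*t] q)) (T^[k] (T^[b*t] q)))
      ≤ Ssum (N + a*t) + Ssum (N + b*t) := by
    intro _ N
    have hbound : ∀ k, dist (T^[k] (T^[a*t] q)) (T^[k] (T^[b*t] q)) ≤
        dist (T^[k + a*t] q) (T^[k + a*t] p) + dist (T^[k + b*t] q) (T^[k + b*t] p) := by
      intro k
      have e1 : T^[k] (T^[a*t] q) = T^[k + a*t] q := (Function.iterate_add_apply T k (a*t) q).symm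
      have e2 : T^[k] (T^[b*t] q) = T^[k + b*t] q := (Function.iterate_add_apply T k (b*t) q).symm
      have e3 : T^[k + a*t] p = T^[k] p := by
        rw [Function.iterate_add_apply, iterate_period htp]
      have e4 : T^[k + b*t] p = T^[k] p := by
        rw [Function.iterate_add_apply, iterate_period htp]
      rw [e1, e2]
      calc dist (T^[k + a*t] q) (T^[k + b*t] q)
          ≤ dist (T^[k + a*t] q) (T^[k] p) + dist (T^[k] p) (T^[k + b*t] q) := dist_triangle _ _ _
      _ = dist (T^[k + a*t] q) (T^[k + a*t] p) + dist (T^[k + b*t] q) (T^[k + b*t] p) := by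
          rw [e3, e4, dist_comm (T^[k] p)]
    calc (∑ k ∈ Finset.range N, dist (T^[k] (T^[a*t] q)) (T^[k] (T^[b*t] q)))
        ≤ ∑ k ∈ Finset.range N, (dist (T^[k + a*t] q) (T^[k + a*t] p)
            + dist (T^[k + b*t] q) (T^[k + b*t] p)) :=
          Finset.sum_le_sum fun k _ => hbound k
    _ = (∑ k ∈ Finset.range N, dist (T^[k + a*t] q) (T^[k + a*t] p))
          + ∑ k ∈ Finset.range N, dist (T^[k + b*t] q) (T^[k + b*t] p) :=
          Finset.sum_add_distrib
    _ ≤ Ssum (N + a*t) + Ssum (N + b*t) := add_le_add (hshift _ _) (hshift _ _)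
  -- pick a good time
  set m := max (a*t) (b*t) with hm
  set ε' := ε/5 with hε'
  have hε'pos : 0 < ε' := by rw [hε']; linarith
  have hfreq : ∃ᶠ N in atTop, birkhoffAvg T q p N < ε' := by
    apply frequently_lt_of_liminf_lt ((avg_bddAbove T q p).isCoboundedUnder_ge)
    rw [hqp]
    exact hε'pos
  obtain ⟨N₁, hN₁ge, hN₁⟩ := frequently_atTop.mp hfreq (n + 2*m + 1)
  set N := N₁ - m with hN
  have hNm : N + m = N₁ := by omega
  have hNn : n ≤ N := by omega
  have hNpos : 0 < N := by omega
  have hN₁le : N₁ ≤ 2 * N := by omega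
  refine ⟨N, hNn, ?_⟩
  have hNpos' : (0:ℝ) < N := by exact_mod_cast hNpos
  have hN₁pos : (0:ℝ) < N₁ := by
    have : 0 < N₁ := by omega
    exact_mod_cast this
  have hS1 : Ssum N₁ < ε' * N₁ := by
    have : birkhoffAvg T q p N₁ = Ssum N₁ / N₁ := rfl
    rw [this] at hN₁
    exact (div_lt_iff₀ hN₁pos).mp hN₁
  have hSa : Ssum (N + a*t) ≤ Ssum N₁ := hSmono (by omega)
  have hSb : Ssum (N + b*t) ≤ Ssum N₁ := hSmono (by omega)
  have hnum : (∑ k ∈ Finset.range N, dist (T^[k] (T^[a*t] q)) (T^[k] (T^[b*t] q)))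
      ≤ 2 * Ssum N₁ := by
    have := hpt 0 N
    linarith
  have hN₁le' : (N₁:ℝ) ≤ 2 * N := by exact_mod_cast hN₁le
  show (∑ k ∈ Finset.range N, dist (T^[k] (T^[a*t] q)) (T^[k] (T^[b*t] q))) / N < ε
  rw [div_lt_iff₀ hNpos']
  have h4 : 2 * Ssum N₁ < 2 * (ε' * N₁) := by linarith
  have h5 : ε' * N₁ ≤ ε' * (2 * N) := by
    apply mul_le_mul_of_nonneg_left hN₁le' hε'pos.le
  calc (∑ k ∈ Finset.range N, dist (T^[k] (T^[a*t] q)) (T^[k] (T^[b*t] q)))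
      ≤ 2 * Ssum N₁ := hnum
  _ < 2 * (ε' * N₁) := h4
  _ ≤ 2 * (ε' * (2 * N)) := by linarith
  _ = (4 * ε') * N := by ring
  _ < ε * N := by
      have : 4 * ε' < ε := by rw [hε']; linarith
      exact mul_lt_mul_of_pos_right this hNpos'

end Dyn

lemma dense_orbit_multiples {X : Type*} [MetricSpace X] [CompactSpace X] {T : X → X}
    (hT : Continuous T)
    (htt : ∀ n : ℕ, 1 ≤ n → ∀ U V : Set X, IsOpen U → IsOpen V →
      U.Nonempty → V.Nonempty → ∃ m : ℕ, ((T^[n])^[m] ⁻¹' U ∩ V).Nonempty)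
    {q : X} (hq : Dense (Set.range fun n : ℕ => T^[n] q))
    (hperf : ∀ x : X, ∀ U : Set X, IsOpen U → x ∈ U → ∃ y ∈ U, y ≠ x)
    {t : ℕ} (ht1 : 1 ≤ t) :
    Dense (Set.range fun j : ℕ => T^[j * t] q) := by
  haveI : Nonempty X := ⟨q⟩
  set S : ℕ → Set X := fun r => Set.range (fun j : ℕ => T^[j * t + r] q) with hS
  set F : ℕ → Set X := fun r => closure (S r) with hF
  have hFclosed : ∀ r, IsClosed (F r) := fun r => isClosed_closure
  have hcover : ⋃ r : Fin t, F (r : ℕ) = univ := by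
    apply eq_univ_of_univ_subset
    have h1 : Set.range (fun n : ℕ => T^[n] q) ⊆ ⋃ r : Fin t, F (r : ℕ) := by
      rintro _ ⟨n, rfl⟩
      refine mem_iUnion.mpr ⟨⟨n % t, Nat.mod_lt n ht1⟩, subset_closure ⟨n / t, ?_⟩⟩
      simp only
      congr 1
      rw [mul_comm]
      exact Nat.div_add_mod n t
    calc univ = closure (Set.range fun n : ℕ => T^[n] q) := hq.closure_eq.symm
    _ ⊆ closure (⋃ r : Fin t, F (r : ℕ)) := closure_mono h1
    _ = ⋃ r : Fin t, F (r : ℕ) :=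
        (isClosed_iUnion_of_finite fun r : Fin t => hFclosed (r : ℕ)).closure_eq
  have hmaps : ∀ r, MapsTo (T^[t]) (F r) (F r) := by
    intro r x hx
    have h1 : T^[t] '' S r ⊆ F r := by
      rintro _ ⟨_, ⟨j, rfl⟩, rfl⟩
      apply subset_closure
      refine ⟨j + 1, ?_⟩
      simp only
      rw [← Function.iterate_add_apply]
      congr 1
      ring
    have h2 : T^[t] x ∈ closure (T^[t] '' S r) :=
      image_closure_subset_closure_image (hT.iterate t) ⟨x, hx, rfl⟩
    exact closure_minimal h1 (hFclosed r) h2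
  obtain ⟨r₀, hr₀⟩ :=
    nonempty_interior_of_iUnion_of_closed (fun r : Fin t => hFclosed (r : ℕ)) hcover
  have hFr₀ : F (r₀ : ℕ) = univ := by
    have hdense : Dense (F (r₀ : ℕ)) := by
      rw [dense_iff_inter_open]
      intro Vop hVop hVne
      obtain ⟨m, y, hy1, hy2⟩ := htt t ht1 Vop (interior (F (r₀ : ℕ)))
        hVop isOpen_interior hVne hr₀
      refine ⟨(T^[t])^[m] y, hy1, ((hmaps (r₀ : ℕ)).iterate m) (interior_subset hy2)⟩
    rw [← (hFclosed (r₀ : ℕ)).closure_eq, hdense.closure_eq]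
  have hTdense : Dense (T '' univ : Set X) := by
    rw [dense_iff_inter_open]
    intro U hU hUne
    have hU' : (U \ {q}).Nonempty := by
      by_cases hqU : q ∈ U
      · obtain ⟨y, hyU, hyq⟩ := hperf q U hU hqU
        exact ⟨y, hyU, by simpa using hyq⟩
      · obtain ⟨x, hx⟩ := hUne
        exact ⟨x, hx, fun h => hqU (mem_singleton_iff.mp h ▸ hx)⟩
    have hopen : IsOpen (U \ {q}) := hU.sdiff isClosed_singleton
    obtain ⟨z, hzS, hzU⟩ := hq.exists_mem_open hopen hU'
    obtain ⟨n, rfl⟩ := hzS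
    have hn : n ≠ 0 := by
      rintro rfl
      exact hzU.2 (by simp)
    obtain ⟨n', rfl⟩ := Nat.exists_eq_succ_of_ne_zero hn
    exact ⟨T^[n'+1] q, hzU.1, ⟨T^[n'] q, mem_univ _,
      (Function.iterate_succ_apply' T n' q).symm⟩⟩
  have hstep : ∀ r : ℕ, F r = univ → F (r+1) = univ := by
    intro r hr
    have h1 : T '' S r ⊆ S (r+1) := by
      rintro _ ⟨_, ⟨j, rfl⟩, rfl⟩
      refine ⟨j, ?_⟩
      simp only
      rw [show j*t+(r+1) = (j*t+r)+1 from rfl, Function.iterate_succ_apply']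
    have h2 : T '' univ ⊆ F (r+1) := by
      have e1 : T '' univ = T '' (F r) := by rw [hr]
      rw [e1]
      calc T '' (F r) ⊆ closure (T '' S r) := image_closure_subset_closure_image hT
      _ ⊆ closure (S (r+1)) := closure_mono h1
    apply eq_univ_of_univ_subset
    calc univ = closure (T '' univ) := hTdense.closure_eq.symm
    _ ⊆ closure (F (r+1)) := closure_mono h2
    _ = F (r+1) := (hFclosed (r+1)).closure_eq
  have hall : ∀ k, F ((r₀ : ℕ) + k) = univ := by
    intro k
    induction k with
    | zero => simpa using hFr₀
    | succ k ih => exact hstep _ ih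
  have hR : F (t * ((r₀ : ℕ) + 1)) = univ := by
    have hge : (r₀ : ℕ) ≤ t * ((r₀ : ℕ) + 1) := by
      have := r₀.2
      nlinarith [r₀.2]
    have := hall (t * ((r₀ : ℕ) + 1) - (r₀ : ℕ))
    rwa [show (r₀ : ℕ) + (t * ((r₀ : ℕ) + 1) - (r₀ : ℕ)) = t * ((r₀ : ℕ) + 1) by omega] at this
  have hsub : S (t * ((r₀ : ℕ) + 1)) ⊆ Set.range (fun j : ℕ => T^[j * t] q) := by
    rintro _ ⟨j, rfl⟩
    refine ⟨j + ((r₀ : ℕ) + 1), ?_⟩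
    simp only
    congr 1
    ring
  rw [dense_iff_closure_eq]
  apply eq_univ_of_univ_subset
  calc univ = F (t * ((r₀ : ℕ) + 1)) := hR.symm
  _ ⊆ closure (Set.range fun j : ℕ => T^[j * t] q) := closure_mono hsub

lemma not_countable_funBool : ¬ Countable (ℕ → Bool) := by
  intro h
  have hcantor := Cardinal.cantor (Cardinal.mk ℕ)
  have h2 : Cardinal.mk (ℕ → Bool) ≤ Cardinal.aleph0 := Cardinal.mk_le_aleph0
  rw [← Cardinal.power_def, Cardinal.mk_bool] at h2
  simp [Cardinal.mk_nat] at hcantor h2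
  exact absurd (h2.trans_lt hcantor) (lt_irrefl _)


/-- If a TDS is mean sensitive, totally transitive, and contains a mean proximal pair
consisting of a transitive point and a periodic point, then it is densely mean Li-Yorke
chaotic: there are `η > 0` and a dense uncountable mean Li-Yorke set with modulus `η`. -/
theorem densely_mean_LiYorke_chaotic_of_totally_transitive
    {X : Type*} [MetricSpace X] [CompactSpace X] (T : X → X) (hT : Continuous T)
    (hsens : MeanSensitive T)
    (htt : ∀ n : ℕ, 1 ≤ n → ∀ U V : Set X, IsOpen U → IsOpen V →
      U.Nonempty → V.Nonempty → ∃ m : ℕ, ((T^[n])^[m] ⁻¹' U ∩ V).Nonempty)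
    (q p : X)
    (hq : Dense (Set.range fun n : ℕ => T^[n] q))
    (hp : ∃ t : ℕ, 1 ≤ t ∧ T^[t] p = p ∧ ∀ i : ℕ, 1 ≤ i → i < t → T^[i] p ≠ p)
    (hqp : MeanProximalPair T q p) :
    ∃ η > (0 : ℝ), ∃ K : Set X,
      Dense K ∧ ¬ K.Countable ∧ MeanLiYorkeSetMod T η K := by
  classical
  haveI : Nonempty X := ⟨q⟩
  obtain ⟨δ, hδ, hsens'⟩ := hsens
  obtain ⟨t, ht1, htp, -⟩ := hp
  set η := δ/2 with hη
  have hηpos : 0 < η := by rw [hη]; linarith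
  -- perfectness
  have hperf : ∀ x : X, ∀ U : Set X, IsOpen U → x ∈ U → ∃ y ∈ U, y ≠ x := by
    intro x U hU hxU
    obtain ⟨ε, hε, hball⟩ := Metric.isOpen_iff.mp hU x hxU
    obtain ⟨y, hy, hlim⟩ := hsens' x ε hε
    refine ⟨y, hball hy, ?_⟩
    intro hyx
    subst hyx
    have hzero : birkhoffAvg T y y = fun _ => (0:ℝ) := funext fun N => by simp [birkhoffAvg]
    rw [hzero, limsup_const] at hlim
    linarith
  -- dense orbit along multiples of t
  have hDq : Dense (Set.range fun j : ℕ => T^[j * t] q) :=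
    dense_orbit_multiples hT htt hq hperf ht1
  -- dense pairs with large limsup
  have hLS : ∀ U V : Set X, IsOpen U → IsOpen V → U.Nonempty → V.Nonempty →
      ∃ x ∈ U, ∃ y ∈ V, η ≤ limsup (birkhoffAvg T x y) atTop := by
    intro U V hU hV hUne hVne
    obtain ⟨a, ha⟩ := hUne
    obtain ⟨b, hb⟩ := hVne
    obtain ⟨ε, hε, hball⟩ := Metric.isOpen_iff.mp hU a ha
    obtain ⟨u, hu, hlim⟩ := hsens' a ε hε
    have h1 : limsup (birkhoffAvg T a u) atTop ≤
        limsup (birkhoffAvg T a b) atTop + limsup (birkhoffAvg T b u) atTop := by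
      have hle : limsup (birkhoffAvg T a u) atTop ≤
          limsup (birkhoffAvg T a b + birkhoffAvg T b u) atTop := by
        refine limsup_le_limsup (Eventually.of_forall fun N => avg_triangle T a b u N)
          ((avg_bddBelow T a u).isCoboundedUnder_le) ?_
        refine isBoundedUnder_of ⟨2 * Metric.diam (Set.univ : Set X), fun N => ?_⟩
        have h1 := avg_le_diam T a b N
        have h2 := avg_le_diam T b u N
        simp only [Pi.add_apply]
        linarith
      refine hle.trans ?_
      exact limsup_add_le (avg_bddBelow T a b) (avg_bddAbove T a b)
        ((avg_bddBelow T b u).isCoboundedUnder_le) (avg_bddAbove T b u)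
    by_cases hc : η ≤ limsup (birkhoffAvg T a b) atTop
    · exact ⟨a, ha, b, hb, hc⟩
    · push_neg at hc
      refine ⟨u, hball hu, b, hb, ?_⟩
      rw [avg_symm T u b]
      rw [hη] at hc ⊢
      linarith
  -- the three families of dense open sets
  set E : ℕ → Set (X × X) := fun n =>
    {z : X × X | ∃ N, n ≤ N ∧ birkhoffAvg T z.1 z.2 N < 1/(n+1)} with hE
  set G : ℕ → Set (X × X) := fun n =>
    {z : X × X | ∃ N, n ≤ N ∧ η - 1/(n+1) < birkhoffAvg T z.1 z.2 N} with hG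
  set Dc : Set (X × X) := {z : X × X | z.1 ≠ z.2} with hDc
  have hEopen : ∀ n, IsOpen (E n) := by
    intro n
    have : E n = ⋃ N : ℕ, ⋃ (_ : n ≤ N), {z : X × X | birkhoffAvg T z.1 z.2 N < 1/(n+1)} := by
      ext z; simp [hE]
    rw [this]
    exact isOpen_iUnion fun N => isOpen_iUnion fun _ =>
      isOpen_lt (avg_cont hT N) continuous_const
  have hGopen : ∀ n, IsOpen (G n) := by
    intro n
    have : G n = ⋃ N : ℕ, ⋃ (_ : n ≤ N), {z : X × X | η - 1/(n+1) < birkhoffAvg T z.1 z.2 N} := by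
      ext z; simp [hG]
    rw [this]
    exact isOpen_iUnion fun N => isOpen_iUnion fun _ =>
      isOpen_lt continuous_const (avg_cont hT N)
  have hDcopen : IsOpen Dc := isClosed_diagonal.isOpen_compl
  -- rectangle criterion for density
  have hrect : ∀ S : Set (X × X),
      (∀ U V : Set X, IsOpen U → IsOpen V → U.Nonempty → V.Nonempty →
        ∃ z ∈ U ×ˢ V, z ∈ S) → Dense S := by
    intro S h
    rw [dense_iff_inter_open]
    intro O hO hOne
    obtain ⟨z, hz⟩ := hOne
    obtain ⟨u, v, huo, hvo, hzu, hzv, huv⟩ := isOpen_prod_iff.mp hO z.1 z.2 (by simpa using hz)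
    obtain ⟨w, hw1, hw2⟩ := h u v huo hvo ⟨z.1, hzu⟩ ⟨z.2, hzv⟩
    exact ⟨w, huv hw1, hw2⟩
  have hEdense : ∀ n, Dense (E n) := by
    intro n
    apply hrect
    intro U V hU hV hUne hVne
    obtain ⟨x, ⟨j₁, rfl⟩, hxU⟩ := hDq.exists_mem_open hU hUne
    obtain ⟨y, ⟨j₂, rfl⟩, hyV⟩ := hDq.exists_mem_open hV hVne
    obtain ⟨N, hN1, hN2⟩ := mp_freq htp hqp j₁ j₂ (1/(n+1)) (by positivity) n
    exact ⟨(T^[j₁*t] q, T^[j₂*t] q), mk_mem_prod hxU hyV, ⟨N, hN1, hN2⟩⟩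
  have hGdense : ∀ n, Dense (G n) := by
    intro n
    apply hrect
    intro U V hU hV hUne hVne
    obtain ⟨x, hxU, y, hyV, hxy⟩ := hLS U V hU hV hUne hVne
    have hfreq : ∃ᶠ N in atTop, η - 1/(n+1) < birkhoffAvg T x y N := by
      apply frequently_lt_of_lt_limsup ((avg_bddBelow T x y).isCoboundedUnder_le)
      have : η - 1/(n+1) < η := by
        have : (0:ℝ) < 1/(n+1) := by positivity
        linarith
      linarith [hxy]
    obtain ⟨N, hN1, hN2⟩ := frequently_atTop.mp hfreq n
    exact ⟨(x, y), mk_mem_prod hxU hyV, ⟨N, hN1, hN2⟩⟩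
  have hDcdense : Dense Dc := by
    apply hrect
    intro U V hU hV hUne hVne
    obtain ⟨a, ha⟩ := hUne
    obtain ⟨b, hb⟩ := hVne
    by_cases hab : a = b
    · subst hab
      obtain ⟨y, hy, hya⟩ := hperf a (U ∩ V) (hU.inter hV) ⟨ha, hb⟩
      exact ⟨(a, y), mk_mem_prod ha hy.2, fun h => hya (h.symm)⟩
    · exact ⟨(a, b), mk_mem_prod ha hb, hab⟩
  -- the combined dense open symmetric sets
  set Vn : ℕ → Set (X × X) := fun n => (E n ∩ G n) ∩ Dc with hVn
  have hVno : ∀ n, IsOpen (Vn n) := fun n =>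
    ((hEopen n).inter (hGopen n)).inter hDcopen
  have hVnd : ∀ n, Dense (Vn n) := fun n =>
    (((hEdense n).inter_of_isOpen_left (hGdense n) (hEopen n)).inter_of_isOpen_left
      hDcdense ((hEopen n).inter (hGopen n)))
  have hVns : ∀ n, ∀ z : X × X, z ∈ Vn n → (z.2, z.1) ∈ Vn n := by
    rintro n ⟨z1, z2⟩ ⟨⟨⟨N1, hN1, hN1'⟩, ⟨N2, hN2, hN2'⟩⟩, hne⟩
    refine ⟨⟨⟨N1, hN1, ?_⟩, ⟨N2, hN2, ?_⟩⟩, ?_⟩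
    · rwa [avg_symm T z2 z1]
    · rwa [avg_symm T z2 z1]
    · exact fun h => hne h.symm
  -- target open sets for density of K
  obtain ⟨D0, hD0c, hD0d⟩ := TopologicalSpace.exists_countable_dense X
  have hD0ne : D0.Nonempty := hD0d.nonempty
  obtain ⟨u, hu⟩ := hD0c.exists_eq_range hD0ne
  have hudense : Dense (Set.range u) := hu ▸ hD0d
  set O : ℕ → Set X := fun n => ball (u n.unpair.1) (1/(n.unpair.2 + 1)) with hO
  have hOo : ∀ i, IsOpen (O i) := fun i => isOpen_ball
  have hOne : ∀ i, (O i).Nonempty := fun i =>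
    ⟨u i.unpair.1, mem_ball_self (by positivity)⟩
  -- the Mycielski construction
  obtain ⟨g, hgO, hgpair⟩ := mycielski Vn hVno hVnd hVns O hOo hOne
  set K : Set X := Set.range (fun pr : ℕ × (ℕ → Bool) => g pr.1 pr.2) with hK
  refine ⟨η, hηpos, K, ?_, ?_, ?_⟩
  · -- dense
    rw [Metric.dense_iff]
    intro x ε hε
    obtain ⟨z, hzS, hz⟩ := hudense.exists_mem_open isOpen_ball
      (Metric.nonempty_ball.mpr (half_pos hε)) (U := ball x (ε/2))
    obtain ⟨m, rfl⟩ := hzS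
    obtain ⟨j, hj⟩ := exists_nat_one_div_lt (half_pos hε)
    refine ⟨g (Nat.pair m j) (fun _ => false), ?_, ⟨(Nat.pair m j, fun _ => false), rfl⟩⟩
    have hmem := hgO (Nat.pair m j) (fun _ => false)
    rw [hO] at hmem
    simp only [Nat.unpair_pair] at hmem
    have h1 : dist (g (Nat.pair m j) (fun _ => false)) (u m) < 1/(j+1) := mem_ball.mp hmem
    have h2 : dist (u m) x < ε/2 := mem_ball.mp hz
    have : dist (g (Nat.pair m j) (fun _ => false)) x < ε := by
      calc dist (g (Nat.pair m j) (fun _ => false)) x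
          ≤ dist (g (Nat.pair m j) (fun _ => false)) (u m) + dist (u m) x := dist_triangle _ _ _
      _ < 1/(j+1) + ε/2 := by linarith
      _ < ε/2 + ε/2 := by linarith
      _ = ε := by ring
    exact mem_ball.mpr this
  · -- uncountable
    intro hKc
    have hginj : Function.Injective (g 0) := by
      intro σ σ' h
      by_contra hne
      have hpp := hgpair 0 σ 0 σ' (fun hc => hne (congrArg Prod.snd hc)) 0
      exact hpp.2 (by simpa [hDc] using h)
    have hsub : Set.range (g 0) ⊆ K := by
      rintro _ ⟨σ, rfl⟩
      exact ⟨(0, σ), rfl⟩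
    have hcnt : (Set.range (g 0)).Countable := hKc.mono hsub
    haveI := hcnt.to_subtype
    have : Countable (ℕ → Bool) := by
      have hinj : Function.Injective
          (fun σ : ℕ → Bool => (⟨g 0 σ, mem_range_self σ⟩ : ↥(Set.range (g 0)))) :=
        fun σ σ' h => hginj (Subtype.ext_iff.mp h)
      exact Function.Injective.countable hinj
    exact not_countable_funBool this
  · -- mean Li-Yorke with modulus η
    rintro x ⟨⟨i, σ⟩, rfl⟩ y ⟨⟨i', σ'⟩, rfl⟩ hxy
    have hpr : ∀ n, (g i σ, g i' σ') ∈ Vn n :=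
      hgpair i σ i' σ' (fun h => hxy (congrArg (fun pr : ℕ × (ℕ → Bool) => g pr.1 pr.2) h))
    constructor
    · apply meanProximal_of_freq
      intro ε hε n
      obtain ⟨n₀, hn₀⟩ := exists_nat_one_div_lt hε
      obtain ⟨N, hN1, hN2⟩ := (hpr (max n n₀)).1.1
      refine ⟨N, le_trans (le_max_left _ _) hN1, lt_of_lt_of_le hN2 ?_⟩
      refine le_trans ?_ hn₀.le
      apply one_div_le_one_div_of_le (by positivity)
      have : (n₀ : ℝ) ≤ max n n₀ := by exact_mod_cast le_max_right n n₀
      linarith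
    · apply limsup_ge_of_freq
      intro n
      exact (hpr n).1.2
end

section
/- Let (X,T) be a TDS which is mean sensitive and contains a mean proximal pair (q,p) where q is a transitive point and p is a fixed point (T p = p). Then (X,T) is densely mean Li-Yorke chaotic: there exist η > 0 and a dense uncountable subset K ⊂ X which is a mean Li-Yorke set with modulus η. -/
open Filter Metric Set

lemma bA_symm {X : Type*} [PseudoMetricSpace X] (T : X → X) (x y : X) (N : ℕ) :
    birkhoffAvg T x y N = birkhoffAvg T y x N := by
  unfold birkhoffAvg
  congr 1
  exact Finset.sum_congr rfl fun k _ => dist_comm _ _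

lemma bA_cont {X : Type*} [PseudoMetricSpace X] {T : X → X} (hT : Continuous T) (N : ℕ) :
    Continuous fun z : X × X => birkhoffAvg T z.1 z.2 N := by
  unfold birkhoffAvg
  apply Continuous.div_const
  apply continuous_finset_sum
  intro k _
  exact ((hT.iterate k).comp continuous_fst).dist ((hT.iterate k).comp continuous_snd)

lemma bA_triangle {X : Type*} [PseudoMetricSpace X] (T : X → X) (x y z : X) (N : ℕ) :
    birkhoffAvg T x z N ≤ birkhoffAvg T x y N + birkhoffAvg T y z N := by
  unfold birkhoffAvg
  rw [← add_div]
  rcases Nat.eq_zero_or_pos N with h|h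
  · simp [h]
  · gcongr ?_ / _
    rw [← Finset.sum_add_distrib]
    exact Finset.sum_le_sum fun k _ => dist_triangle _ _ _

lemma bA_nonneg {X : Type*} [PseudoMetricSpace X] (T : X → X) (x y : X) (N : ℕ) :
    0 ≤ birkhoffAvg T x y N :=
  div_nonneg (Finset.sum_nonneg fun _ _ => dist_nonneg) (Nat.cast_nonneg N)

section cpt
variable {X : Type*} [MetricSpace X] [CompactSpace X] (T : X → X)

lemma bA_bdd (x y : X) (N : ℕ) : birkhoffAvg T x y N ≤ diam (univ : Set X) := by
  have hd : 0 ≤ diam (univ : Set X) := diam_nonneg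
  rcases Nat.eq_zero_or_pos N with h|h
  · simp [birkhoffAvg, h, hd]
  · rw [birkhoffAvg, div_le_iff₀ (by exact_mod_cast h)]
    calc ∑ k ∈ Finset.range N, dist (T^[k] x) (T^[k] y)
        ≤ ∑ _k ∈ Finset.range N, diam (univ : Set X) :=
          Finset.sum_le_sum fun k _ =>
            dist_le_diam_of_mem isCompact_univ.isBounded (mem_univ _) (mem_univ _)
      _ = diam (univ : Set X) * N := by simp [mul_comm]

lemma bA_isBddAbove (x y : X) :
    IsBoundedUnder (· ≤ ·) atTop (birkhoffAvg T x y) :=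
  isBoundedUnder_of ⟨diam (univ : Set X), fun N => bA_bdd T x y N⟩

lemma bA_isBddBelow (x y : X) :
    IsBoundedUnder (· ≥ ·) atTop (birkhoffAvg T x y) :=
  isBoundedUnder_of ⟨0, fun N => bA_nonneg T x y N⟩

lemma liminf_eq_zero_of_freq {x y : X}
    (h : ∀ ε > (0:ℝ), ∀ M : ℕ, ∃ N ≥ M, birkhoffAvg T x y N < ε) :
    liminf (birkhoffAvg T x y) atTop = 0 := by
  have h2 : 0 ≤ liminf (birkhoffAvg T x y) atTop := by
    apply le_liminf_of_le ((bA_isBddAbove T x y).isCoboundedUnder_ge)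
    exact Eventually.of_forall fun (N : ℕ) => bA_nonneg T x y N
  refine le_antisymm ?_ h2
  by_contra hc
  push_neg at hc
  apply absurd (le_refl (liminf (birkhoffAvg T x y) atTop))
  push_neg
  calc liminf (birkhoffAvg T x y) atTop
      ≤ liminf (birkhoffAvg T x y) atTop / 2 := by
        apply liminf_le_of_frequently_le _ (bA_isBddBelow T x y)
        rw [frequently_atTop]
        intro M
        obtain ⟨N, hN, hlt⟩ := h (liminf (birkhoffAvg T x y) atTop / 2) (by linarith) M
        exact ⟨N, hN, hlt.le⟩
    _ < liminf (birkhoffAvg T x y) atTop := by linarith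

lemma freq_of_liminf_eq_zero {x y : X}
    (h : liminf (birkhoffAvg T x y) atTop = 0) :
    ∀ ε > (0:ℝ), ∀ M : ℕ, ∃ N ≥ M, birkhoffAvg T x y N < ε := by
  intro ε hε M
  have : ∃ᶠ N in atTop, birkhoffAvg T x y N < ε := by
    apply frequently_lt_of_liminf_lt ((bA_isBddAbove T x y).isCoboundedUnder_ge)
    rw [h]; exact hε
  rw [frequently_atTop] at this
  exact this M

lemma le_limsup_of_freq {x y : X} {η : ℝ}
    (h : ∀ ε > (0:ℝ), ∀ M : ℕ, ∃ N ≥ M, η - ε < birkhoffAvg T x y N) :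
    η ≤ limsup (birkhoffAvg T x y) atTop := by
  by_contra hc
  push_neg at hc
  set L := limsup (birkhoffAvg T x y) atTop with hL
  have key : η - (η - L)/2 ≤ L := by
    apply le_limsup_of_frequently_le _ (bA_isBddAbove T x y)
    rw [frequently_atTop]
    intro M
    obtain ⟨N, hN, hlt⟩ := h ((η - L)/2) (by linarith) M
    exact ⟨N, hN, hlt.le⟩
  linarith

lemma freq_of_lt_limsup {x y : X} {c : ℝ}
    (h : c < limsup (birkhoffAvg T x y) atTop) :
    ∀ M : ℕ, ∃ N ≥ M, c < birkhoffAvg T x y N := by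
  intro M
  have : ∃ᶠ N in atTop, c < birkhoffAvg T x y N :=
    frequently_lt_of_lt_limsup ((bA_isBddBelow T x y).isCoboundedUnder_le) h
  rw [frequently_atTop] at this
  exact this M

lemma limsup_bA_triangle (x y z : X) :
    limsup (birkhoffAvg T x z) atTop ≤
      limsup (birkhoffAvg T x y) atTop + limsup (birkhoffAvg T y z) atTop := by
  have h1 : limsup (birkhoffAvg T x z) atTop ≤
      limsup (fun N => birkhoffAvg T x y N + birkhoffAvg T y z N) atTop := by
    apply limsup_le_limsup (Eventually.of_forall fun N => bA_triangle T x y z N)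
      ((bA_isBddBelow T x z).isCoboundedUnder_le)
      (isBoundedUnder_of ⟨diam (univ : Set X) + diam (univ : Set X),
        fun N => add_le_add (bA_bdd T x y N) (bA_bdd T y z N)⟩)
  refine h1.trans ?_
  exact limsup_add_le (bA_isBddBelow T x y) (bA_isBddAbove T x y)
    ((bA_isBddBelow T y z).isCoboundedUnder_le) (bA_isBddAbove T y z)

end cpt

lemma shift_freq {X : Type*} [MetricSpace X] (T : X → X) {q p : X} (hp : T p = p)
    (hqp : ∀ ε > (0:ℝ), ∀ M : ℕ, ∃ N ≥ M, birkhoffAvg T q p N < ε) (n m : ℕ) :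
    ∀ ε > (0:ℝ), ∀ M : ℕ, ∃ N ≥ M, birkhoffAvg T (T^[n] q) (T^[m] q) N < ε := by
  intro ε hε M
  set s := max n m with hs
  obtain ⟨N, hN, hlt⟩ := hqp (ε/4) (by linarith) (max (M + s) (2*s + 1))
  have hN1 : M + s ≤ N := le_trans (le_max_left _ _) hN
  have hN2 : 2*s + 1 ≤ N := le_trans (le_max_right _ _) hN
  set g : ℕ → ℝ := fun j => dist (T^[j] q) p with hg
  have hgnn : ∀ j, 0 ≤ g j := fun j => dist_nonneg
  have havg : birkhoffAvg T q p N = (∑ j ∈ Finset.range N, g j) / N := by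
    unfold birkhoffAvg
    congr 1
    refine Finset.sum_congr rfl fun j _ => ?_
    rw [Function.iterate_fixed hp j]
  have hsum : ∑ j ∈ Finset.range N, g j < N * (ε/4) := by
    have hNpos : (0:ℝ) < N := by
      have : 0 < N := by omega
      exact_mod_cast this
    rw [havg, div_lt_iff₀ hNpos] at hlt
    linarith
  refine ⟨N - s, by omega, ?_⟩
  have hNs : N - s ≥ 1 := by omega
  have key : ∀ r : ℕ, r ≤ s → ∑ k ∈ Finset.range (N - s), dist (T^[r + k] q) p
      ≤ ∑ j ∈ Finset.range N, g j := by
    intro r hr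
    have : ∑ k ∈ Finset.range (N - s), dist (T^[r + k] q) p
        = ∑ j ∈ Finset.Ico r (r + (N - s)), g j := by
      rw [Finset.sum_Ico_eq_sum_range]
      simp [hg]
    rw [this]
    apply Finset.sum_le_sum_of_subset_of_nonneg
    · intro j hj
      rw [Finset.mem_Ico] at hj
      rw [Finset.mem_range]
      omega
    · intro j _ _; exact hgnn j
  have tri : ∑ k ∈ Finset.range (N - s), dist (T^[k] (T^[n] q)) (T^[k] (T^[m] q))
      ≤ 2 * ∑ j ∈ Finset.range N, g j := by
    calc ∑ k ∈ Finset.range (N - s), dist (T^[k] (T^[n] q)) (T^[k] (T^[m] q))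
        ≤ ∑ k ∈ Finset.range (N - s), (dist (T^[n + k] q) p + dist (T^[m + k] q) p) := by
          apply Finset.sum_le_sum
          intro k _
          rw [← Function.iterate_add_apply, ← Function.iterate_add_apply, add_comm k n, add_comm k m]
          exact dist_triangle_right _ _ _
      _ = ∑ k ∈ Finset.range (N - s), dist (T^[n + k] q) p
          + ∑ k ∈ Finset.range (N - s), dist (T^[m + k] q) p := Finset.sum_add_distrib
      _ ≤ 2 * ∑ j ∈ Finset.range N, g j := by
          have h1 := key n (le_max_left _ _)
          have h2 := key m (le_max_right _ _)
          linarith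
  have hN'pos : (0:ℝ) < (N - s : ℕ) := by exact_mod_cast hNs
  rw [birkhoffAvg, div_lt_iff₀ hN'pos]
  have hNle : (N:ℝ) ≤ 2 * ((N - s : ℕ):ℝ) := by
    have : N ≤ 2 * (N - s) := by omega
    exact_mod_cast this
  calc ∑ k ∈ Finset.range (N - s), dist (T^[k] (T^[n] q)) (T^[k] (T^[m] q))
      ≤ 2 * ∑ j ∈ Finset.range N, g j := tri
    _ < 2 * (N * (ε/4)) := by
        have : (0:ℝ) < 2 := by norm_num
        nlinarith [hsum]
    _ ≤ ε * ((N - s : ℕ):ℝ) := by nlinarith [hε, hNle]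

section sel
variable {X : Type*} [MetricSpace X]
variable {D : Set (X × X)} (hDd : Dense D) (hDo : IsOpen D)
variable (hperf : ∀ (x : X) (ε : ℝ), 0 < ε → ∃ y, y ∈ ball x ε ∧ y ≠ x)

include hDd hDo hperf in
lemma core2 {O P : Set X} (hO : IsOpen O) (hOne : O.Nonempty)
    (hP : IsOpen P) (hPne : P.Nonempty) :
    ∃ A B : Set X, IsOpen A ∧ A.Nonempty ∧ A ⊆ O ∧ IsOpen B ∧ B.Nonempty ∧ B ⊆ P ∧
      A ×ˢ B ⊆ D ∧ Disjoint A B := by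
  obtain ⟨u, hu⟩ := hOne
  obtain ⟨v', hv'⟩ := hPne
  have hvex : ∃ v ∈ P, v ≠ u := by
    rcases eq_or_ne v' u with rfl | hne
    · obtain ⟨σ, hσ, hball⟩ := Metric.isOpen_iff.1 hP v' hv'
      obtain ⟨v, hv1, hv2⟩ := hperf v' σ hσ
      exact ⟨v, hball hv1, hv2⟩
    · exact ⟨v', hv', hne⟩
  obtain ⟨v, hvP, hvu⟩ := hvex
  set d := dist u v with hd
  have hdpos : 0 < d := dist_pos.2 (Ne.symm hvu)
  set O₁ := O ∩ ball u (d/2) with hO₁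
  set P₁ := P ∩ ball v (d/2) with hP₁
  have hO₁o : IsOpen O₁ := hO.inter isOpen_ball
  have hP₁o : IsOpen P₁ := hP.inter isOpen_ball
  have hO₁ne : O₁.Nonempty := ⟨u, hu, mem_ball_self (by linarith)⟩
  have hP₁ne : P₁.Nonempty := ⟨v, hvP, mem_ball_self (by linarith)⟩
  have hdisj : Disjoint O₁ P₁ := by
    rw [Set.disjoint_left]
    rintro x ⟨-, hx1⟩ ⟨-, hx2⟩
    rw [mem_ball] at hx1 hx2
    have := dist_triangle u x v
    rw [dist_comm x u] at hx1
    rw [dist_comm x v] at hx2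
    rw [dist_comm x v] at this
    linarith
  have hprod : IsOpen (O₁ ×ˢ P₁) := hO₁o.prod hP₁o
  have hne : (O₁ ×ˢ P₁).Nonempty := hO₁ne.prod hP₁ne
  obtain ⟨z, hz1, hz2⟩ := hDd.inter_open_nonempty _ hprod hne
  have hopen : IsOpen ((O₁ ×ˢ P₁) ∩ D) := hprod.inter hDo
  obtain ⟨ρ, hρ, hball⟩ := Metric.isOpen_iff.1 hopen z ⟨hz1, hz2⟩
  refine ⟨ball z.1 ρ, ball z.2 ρ, isOpen_ball, ⟨z.1, mem_ball_self hρ⟩, ?_,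
    isOpen_ball, ⟨z.2, mem_ball_self hρ⟩, ?_, ?_, ?_⟩
  · intro x hx
    have : (x, z.2) ∈ ball z ρ := by
      rw [← ball_prod_same]; exact ⟨hx, mem_ball_self hρ⟩
    exact ((hball this).1.1 : x ∈ O₁).1
  · intro y hy
    have : (z.1, y) ∈ ball z ρ := by
      rw [← ball_prod_same]; exact ⟨mem_ball_self hρ, hy⟩
    exact ((hball this).1.2 : y ∈ P₁).1
  · rintro ⟨x, y⟩ ⟨hx, hy⟩
    have : (x, y) ∈ ball z ρ := by
      rw [← ball_prod_same]; exact ⟨hx, hy⟩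
    exact (hball this).2
  · apply Set.disjoint_left.2
    intro x hx hx'
    have h1 : (x, z.2) ∈ ball z ρ := by rw [← ball_prod_same]; exact ⟨hx, mem_ball_self hρ⟩
    have h2 : (z.1, x) ∈ ball z ρ := by rw [← ball_prod_same]; exact ⟨mem_ball_self hρ, hx'⟩
    exact Set.disjoint_left.1 hdisj ((hball h1).1.1) ((hball h2).1.2)

include hDd hDo hperf in
lemma innerShrink : ∀ (t : ℕ) (O : Fin t → Set X),
    (∀ i, IsOpen (O i) ∧ (O i).Nonempty) → ∀ (P : Set X), IsOpen P → P.Nonempty →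
    ∃ (O' : Fin t → Set X) (P' : Set X),
      (∀ i, IsOpen (O' i) ∧ (O' i).Nonempty ∧ O' i ⊆ O i) ∧
      IsOpen P' ∧ P'.Nonempty ∧ P' ⊆ P ∧
      ∀ i, (O' i ×ˢ P' ⊆ D) ∧ Disjoint (O' i) P' := by
  intro t
  induction t with
  | zero =>
    intro O hO P hPo hPne
    exact ⟨O, P, fun i => i.elim0, hPo, hPne, le_refl _, fun i => i.elim0⟩
  | succ t ih =>
    intro O hO P hPo hPne
    obtain ⟨O₀, P₀, hO₀, hP₀o, hP₀ne, hP₀sub, hpair₀⟩ :=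
      ih (fun i => O i.castSucc) (fun i => hO i.castSucc) P hPo hPne
    obtain ⟨A, B, hAo, hAne, hAsub, hBo, hBne, hBsub, hABD, hABdisj⟩ :=
      core2 hDd hDo hperf (hO (Fin.last t)).1 (hO (Fin.last t)).2 hP₀o hP₀ne
    refine ⟨Fin.snoc O₀ A, B, ?_, hBo, hBne, hBsub.trans hP₀sub, ?_⟩
    · intro i
      refine Fin.lastCases ?_ ?_ i
      · simpa [Fin.snoc_last] using ⟨hAo, hAne, hAsub⟩
      · intro j
        simpa [Fin.snoc_castSucc] using (hO₀ j)
    · intro i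
      refine Fin.lastCases ?_ ?_ i
      · simpa [Fin.snoc_last] using ⟨hABD, hABdisj⟩
      · intro j
        simp only [Fin.snoc_castSucc]
        constructor
        · exact (Set.prod_mono (le_refl _) hBsub).trans (hpair₀ j).1
        · exact ((hpair₀ j).2.mono_right hBsub)

include hDd hDo hperf in
lemma selection (hDs : ∀ a b : X, (a, b) ∈ D → (b, a) ∈ D) :
    ∀ (t : ℕ) (O : Fin t → Set X), (∀ i, IsOpen (O i) ∧ (O i).Nonempty) →
    ∃ O' : Fin t → Set X,
      (∀ i, IsOpen (O' i) ∧ (O' i).Nonempty ∧ O' i ⊆ O i) ∧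
      ∀ i j, i ≠ j → (O' i ×ˢ O' j ⊆ D) ∧ Disjoint (O' i) (O' j) := by
  intro t
  induction t with
  | zero =>
    intro O hO
    refine ⟨O, ?_, ?_⟩
    · intro i
      exact i.elim0
    · intro i
      exact i.elim0
  | succ t ih =>
    intro O hO
    obtain ⟨O₀, hO₀, hpair₀⟩ := ih (fun i => O i.castSucc) (fun i => hO i.castSucc)
    obtain ⟨O₁, P', hO₁, hP'o, hP'ne, hP'sub, hpair₁⟩ :=
      innerShrink hDd hDo hperf t O₀ (fun i => ⟨(hO₀ i).1, (hO₀ i).2.1⟩)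
        (O (Fin.last t)) (hO (Fin.last t)).1 (hO (Fin.last t)).2
    set F : Fin (t+1) → Set X := Fin.snoc O₁ P' with hF
    refine ⟨F, ?_, ?_⟩
    · intro i
      refine Fin.lastCases ?_ ?_ i
      · simpa [hF, Fin.snoc_last] using ⟨hP'o, hP'ne, hP'sub⟩
      · intro j
        simp only [hF, Fin.snoc_castSucc]
        exact ⟨(hO₁ j).1, (hO₁ j).2.1, (hO₁ j).2.2.trans (hO₀ j).2.2⟩
    · intro i j hij
      refine Fin.lastCases (motive := fun i => i ≠ j →
          (F i ×ˢ F j ⊆ D) ∧ Disjoint (F i) (F j)) ?_ ?_ i hij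
      · -- i = last
        intro hlj
        refine Fin.lastCases (motive := fun j => Fin.last t ≠ j →
            (F (Fin.last t) ×ˢ F j ⊆ D) ∧ Disjoint (F (Fin.last t)) (F j)) ?_ ?_ j hlj
        · intro h; exact absurd rfl h
        · intro j' _
          simp only [hF, Fin.snoc_last, Fin.snoc_castSucc]
          constructor
          · rintro ⟨x, y⟩ ⟨hx, hy⟩
            exact hDs _ _ ((hpair₁ j').1 ⟨hy, hx⟩)
          · exact ((hpair₁ j').2).symm
      · intro i' hij'
        refine Fin.lastCases (motive := fun j => i'.castSucc ≠ j →
            (F i'.castSucc ×ˢ F j ⊆ D) ∧ Disjoint (F i'.castSucc) (F j)) ?_ ?_ j hij'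
        · intro _
          simp only [hF, Fin.snoc_last, Fin.snoc_castSucc]
          exact hpair₁ i'
        · intro j' hne
          simp only [hF, Fin.snoc_castSucc]
          have hne' : i' ≠ j' := by
            intro h; exact hne (by rw [h])
          constructor
          · refine (Set.prod_mono (hO₁ i').2.2 (hO₁ j').2.2).trans (hpair₀ i' j' hne').1
          · exact ((hpair₀ i' j' hne').2.mono (hO₁ i').2.2 (hO₁ j').2.2)

end sel

-- Finset of lists of booleans of given length
private def LF : ℕ → Finset (List Bool)
  | 0 => {[]}
  | (k+1) => ((LF k).image (· ++ [false])) ∪ ((LF k).image (· ++ [true]))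

private lemma mem_LF : ∀ (k : ℕ) (l : List Bool), l ∈ LF k ↔ l.length = k := by
  intro k
  induction k with
  | zero => intro l; simp [LF]
  | succ k ih =>
    intro l
    constructor
    · intro hl
      simp only [LF, Finset.mem_union, Finset.mem_image] at hl
      rcases hl with ⟨a, ha, rfl⟩ | ⟨a, ha, rfl⟩ <;>
        simp [List.length_append, (ih a).1 ha]
    · intro hl
      have hne : l ≠ [] := by intro h; rw [h] at hl; simp at hl
      have hdl : l.dropLast ++ [l.getLast hne] = l := List.dropLast_append_getLast hne
      have hlen : l.dropLast.length = k := by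
        have := List.length_dropLast (xs := l)
        rw [hl] at this; simpa using this
      simp only [LF, Finset.mem_union, Finset.mem_image]
      cases hb : l.getLast hne with
      | false =>
        left; exact ⟨l.dropLast, (ih _).2 hlen, by rw [← hb, hdl]⟩
      | true =>
        right; exact ⟨l.dropLast, (ih _).2 hlen, by rw [← hb, hdl]⟩

private def actF (n : ℕ) : Finset (ℕ × List Bool) :=
  (Finset.range (n+1)).biUnion fun m => (LF (n-m)).image fun l => (m, l)

private lemma mem_actF {n : ℕ} {a : ℕ × List Bool} :
    a ∈ actF n ↔ a.1 + a.2.length = n := by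
  simp only [actF, Finset.mem_biUnion, Finset.mem_range, Finset.mem_image]
  constructor
  · rintro ⟨m, hm, l, hl, rfl⟩
    have := (mem_LF _ l).1 hl
    simp; omega
  · intro h
    refine ⟨a.1, by omega, a.2, (mem_LF _ _).2 (by omega), rfl⟩

section scheme
variable {X : Type*} [MetricSpace X] [CompactSpace X]

lemma exists_scheme
    (hperf : ∀ (x : X) (ε : ℝ), 0 < ε → ∃ y, y ∈ ball x ε ∧ y ≠ x)
    (W : ℕ → Set (X × X)) (hWo : ∀ k, IsOpen (W k)) (hWd : ∀ k, Dense (W k))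
    (hWs : ∀ k (a b : X), (a, b) ∈ W k → (b, a) ∈ W k)
    (V : ℕ → Set X) (hVo : ∀ m, IsOpen (V m)) (hVne : ∀ m, (V m).Nonempty) :
    ∃ x : ℕ × (ℕ → Bool) → X, (∀ m ω, x (m, ω) ∈ V m) ∧ Function.Injective x ∧
      (∀ b b' : ℕ × (ℕ → Bool), b ≠ b' → ∀ k, (x b, x b') ∈ W k) := by
  classical
  -- the dense open sets used at stage n
  set D : ℕ → Set (X × X) := fun n => ⋂ k ∈ Finset.range n, W k with hD
  have hDod : ∀ n, IsOpen (D n) ∧ Dense (D n) := by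
    intro n
    induction n with
    | zero => simpa [hD] using dense_univ
    | succ n ih =>
      have heq : D (n+1) = D n ∩ W n := by
        simp only [hD, Finset.mem_range]
        exact Set.biInter_lt_succ W n
      rw [heq]
      exact ⟨ih.1.inter (hWo n), ih.2.inter_of_isOpen_right (hWd n) (hWo n)⟩
  have hDs : ∀ n (a b : X), (a, b) ∈ D n → (b, a) ∈ D n := by
    intro n a b hab
    simp only [hD, Set.mem_iInter] at hab ⊢
    intro k hk
    exact hWs k a b (hab k hk)
  -- states and invariants
  set State := ((ℕ × List Bool) → X) × ℝ with hState
  set Inv : ℕ → State → Prop := fun n st =>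
    0 < st.2 ∧ st.2 ≤ (1/2)^n ∧
    closedBall (st.1 (n, [])) st.2 ⊆ V n ∧
    ∀ a ∈ actF n, ∀ b ∈ actF n, a ≠ b →
      (closedBall (st.1 a) st.2 ×ˢ closedBall (st.1 b) st.2 ⊆ D n)
      ∧ Disjoint (closedBall (st.1 a) st.2) (closedBall (st.1 b) st.2) with hInv
  set TransP : ℕ → State → State → Prop := fun n st st' =>
    ∀ a ∈ actF n, ∀ b : Bool,
      closedBall (st'.1 (a.1, a.2 ++ [b])) st'.2 ⊆ ball (st.1 a) st.2 with hTransP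
  -- base state
  have base : ∃ st₀ : State, Inv 0 st₀ := by
    obtain ⟨v, hv⟩ := hVne 0
    obtain ⟨ρ, hρ, hball⟩ := Metric.isOpen_iff.1 (hVo 0) v hv
    refine ⟨⟨fun _ => v, min 1 (ρ/2)⟩, ?_, ?_, ?_, ?_⟩
    · exact lt_min one_pos (by linarith)
    · simpa using min_le_left 1 (ρ/2)
    · intro z hz
      apply hball
      rw [mem_closedBall] at hz
      rw [mem_ball]
      calc dist z v ≤ min 1 (ρ/2) := hz
        _ ≤ ρ/2 := min_le_right _ _
        _ < ρ := by linarith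
    · intro a ha b hb hab
      exfalso
      apply hab
      rw [mem_actF] at ha hb
      have ha1 : a.1 = 0 := by omega
      have hb1 : b.1 = 0 := by omega
      have ha2 : a.2 = [] := List.length_eq_zero_iff.1 (by omega)
      have hb2 : b.2 = [] := List.length_eq_zero_iff.1 (by omega)
      rw [Prod.ext_iff]
      exact ⟨by rw [ha1, hb1], by rw [ha2, hb2]⟩
  -- step
  have step : ∀ n (st : State), Inv n st → ∃ st', Inv (n+1) st' ∧ TransP n st st' := by
    intro n st hst
    obtain ⟨hr, hrle, hseed, hpairs⟩ := hst
    set s := actF (n+1) with hs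
    have hseedmem : ((n+1 : ℕ), ([] : List Bool)) ∈ s := by rw [hs, mem_actF]; simp
    have hscard : 0 < s.card := Finset.card_pos.2 ⟨_, hseedmem⟩
    have hFinNe : Nonempty (Fin s.card) := Fin.pos_iff_nonempty.1 hscard
    set e := s.equivFin with he
    -- targets
    set tgt : ℕ × List Bool → Set X := fun a =>
      if a.2 = [] then V (n+1) else ball (st.1 (a.1, a.2.dropLast)) st.2 with htgt
    have htgtprop : ∀ a, IsOpen (tgt a) ∧ (tgt a).Nonempty := by
      intro a
      rw [htgt]
      by_cases h : a.2 = []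
      · simp only [if_pos h]; exact ⟨hVo _, hVne _⟩
      · simp only [if_neg h]
        exact ⟨isOpen_ball, ⟨_, mem_ball_self hr⟩⟩
    obtain ⟨O', hO', hOpairs⟩ := selection (hDod (n+1)).2 (hDod (n+1)).1 hperf
      (hDs (n+1)) s.card (fun i => tgt (e.symm i : ℕ × List Bool))
      (fun i => htgtprop _)
    -- choose points and radius
    have hpt : ∀ i, ∃ y, y ∈ O' i := fun i => (hO' i).2.1
    choose y hy using hpt
    have hrad : ∀ i, ∃ ρ > 0, closedBall (y i) ρ ⊆ O' i := by
      intro i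
      obtain ⟨ρ, hρ, hball⟩ := Metric.isOpen_iff.1 (hO' i).1 (y i) (hy i)
      refine ⟨ρ/2, by linarith, fun z hz => hball ?_⟩
      rw [mem_closedBall] at hz
      rw [mem_ball]
      linarith
    choose ρ hρpos hρsub using hrad
    set r' := min ((1/2)^(n+1)) (Finset.univ.inf' (Finset.univ_nonempty) ρ) with hr'
    have hr'pos : 0 < r' := by
      apply lt_min (by positivity)
      rw [Finset.lt_inf'_iff]
      exact fun i _ => hρpos i
    have hr'le : ∀ i, r' ≤ ρ i := fun i =>
      le_trans (min_le_right _ _) (Finset.inf'_le _ (Finset.mem_univ i))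
    have hr'ball : ∀ i, closedBall (y i) r' ⊆ O' i := fun i =>
      (closedBall_subset_closedBall (hr'le i)).trans (hρsub i)
    set f' : (ℕ × List Bool) → X := fun a =>
      if h : a ∈ s then y (e ⟨a, h⟩) else st.1 a with hf'
    have hf'mem : ∀ (a) (h : a ∈ s), closedBall (f' a) r' ⊆ O' (e ⟨a, h⟩) := by
      intro a h
      rw [show f' a = y (e ⟨a, h⟩) from dif_pos h]
      exact hr'ball _
    have hOsub : ∀ i, O' i ⊆ tgt (e.symm i : ℕ × List Bool) := fun i => (hO' i).2.2
    refine ⟨⟨f', r'⟩, ⟨hr'pos, min_le_left _ _, ?_, ?_⟩, ?_⟩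
    · -- seed
      refine (hf'mem _ hseedmem).trans ((hOsub _).trans ?_)
      rw [Equiv.symm_apply_apply]
      rw [htgt]
      simp
    · -- pairs
      intro a ha b hb hab
      have hia : a ∈ s := ha
      have hib : b ∈ s := hb
      have hne : e ⟨a, hia⟩ ≠ e ⟨b, hib⟩ := by
        intro h
        apply hab
        have := e.injective h
        exact congrArg Subtype.val this
      constructor
      · refine (Set.prod_mono (hf'mem a hia) (hf'mem b hib)).trans ?_
        exact (hOpairs _ _ hne).1
      · exact ((hOpairs _ _ hne).2.mono (hf'mem a hia) (hf'mem b hib))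
    · -- trans
      intro a ha b
      have hc : (a.1, a.2 ++ [b]) ∈ s := by
        show (a.1, a.2 ++ [b]) ∈ actF (n+1)
        rw [mem_actF]
        rw [mem_actF] at ha
        simp only [List.length_append, List.length_cons, List.length_nil]
        omega
      refine (hf'mem _ hc).trans ((hOsub _).trans ?_)
      rw [Equiv.symm_apply_apply, htgt]
      have hne : a.2 ++ [b] ≠ [] := by simp
      simp only [if_neg hne, List.dropLast_concat]
      have : (a.1, a.2) = a := rfl
      rw [this]
  obtain ⟨st₀, h₀⟩ := base
  let seq : ∀ n : ℕ, {st : State // Inv n st} := fun n =>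
    Nat.rec ⟨st₀, h₀⟩
      (fun k ih => ⟨(step k ih.1 ih.2).choose, (step k ih.1 ih.2).choose_spec.1⟩) n
  have hseq : ∀ n, Inv n (seq n).1 := fun n => (seq n).2
  have htrans : ∀ n, TransP n (seq n).1 (seq (n+1)).1 := fun n =>
    (step n (seq n).1 (seq n).2).choose_spec.2
  set fc : ℕ → (ℕ × List Bool) → X := fun n => (seq n).1.1 with hfc
  set rad : ℕ → ℝ := fun n => (seq n).1.2 with hrad2
  set nd : (ℕ × (ℕ → Bool)) → ℕ → (ℕ × List Bool) :=
    fun b k => (b.1, (List.range k).map b.2) with hnd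
  have hndmem : ∀ b k, nd b k ∈ actF (b.1 + k) := by
    intro b k; rw [mem_actF]; simp [hnd]
  have hnest : ∀ (b : ℕ × (ℕ → Bool)) (k : ℕ),
      closedBall (fc (b.1+(k+1)) (nd b (k+1))) (rad (b.1+(k+1)))
      ⊆ closedBall (fc (b.1+k) (nd b k)) (rad (b.1+k)) := by
    intro b k
    have h1 := htrans (b.1+k) (nd b k) (hndmem b k) (b.2 k)
    have h2 : ((nd b k).1, (nd b k).2 ++ [b.2 k]) = nd b (k+1) := by
      simp [hnd, List.range_succ]
    rw [h2] at h1
    have h3 : b.1 + k + 1 = b.1 + (k+1) := by omega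
    rw [h3] at h1
    exact h1.trans ball_subset_closedBall
  have hlim : ∀ b : ℕ × (ℕ → Bool), ∃ z, ∀ k,
      z ∈ closedBall (fc (b.1+k) (nd b k)) (rad (b.1+k)) := by
    intro b
    obtain ⟨z, hz⟩ := IsCompact.nonempty_iInter_of_sequence_nonempty_isCompact_isClosed
      (fun k => closedBall (fc (b.1+k) (nd b k)) (rad (b.1+k)))
      (fun k => hnest b k)
      (fun k => ⟨_, mem_closedBall_self (hseq (b.1+k)).1.le⟩)
      Metric.isClosed_closedBall.isCompact (fun k => Metric.isClosed_closedBall)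
    exact ⟨z, fun k => Set.mem_iInter.1 hz k⟩
  choose xb hxb using hlim
  have hxb' : ∀ b : ℕ × (ℕ → Bool), ∀ n, b.1 ≤ n →
      xb b ∈ closedBall (fc n (b.1, (List.range (n - b.1)).map b.2)) (rad n) := by
    intro b n hn
    have h := hxb b (n - b.1)
    have heq : b.1 + (n - b.1) = n := by omega
    rw [heq] at h
    exact h
  have hdiff : ∀ b b' : ℕ × (ℕ → Bool), b ≠ b' → ∃ n₀, b.1 ≤ n₀ ∧ b'.1 ≤ n₀ ∧
      ∀ n ≥ n₀, ((b.1, (List.range (n - b.1)).map b.2) : ℕ × List Bool)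
        ≠ (b'.1, (List.range (n - b'.1)).map b'.2) := by
    intro b b' hne
    rcases eq_or_ne b.1 b'.1 with h1 | h1
    · have h2 : b.2 ≠ b'.2 := by
        intro h2
        exact hne (Prod.ext h1 h2)
      have hex : ∃ k, b.2 k ≠ b'.2 k := by
        by_contra hc; push_neg at hc; exact h2 (funext hc)
      obtain ⟨k, hk⟩ := hex
      refine ⟨b.1 + k + 1, by omega, by omega, ?_⟩
      intro n hn hEq
      rw [Prod.ext_iff] at hEq
      obtain ⟨-, hEq2⟩ := hEq
      apply hk
      have hklt : k < n - b.1 := by omega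
      have hklt' : k < n - b'.1 := by omega
      have hgk := congrArg (fun l : List Bool => l[k]?) hEq2
      simp only [List.getElem?_map, List.getElem?_range, hklt, hklt',
        if_pos, Option.map_some] at hgk
      exact Option.some.inj hgk
    · exact ⟨max b.1 b'.1, le_max_left _ _, le_max_right _ _,
        fun n hn hEq => h1 (congrArg (fun z : ℕ × List Bool => z.1) hEq)⟩
  have hkey : ∀ b b' : ℕ × (ℕ → Bool), b ≠ b' →
      xb b ≠ xb b' ∧ ∀ k, (xb b, xb b') ∈ W k := by
    intro b b' hne
    obtain ⟨n₀, hb1, hb'1, hnd0⟩ := hdiff b b' hne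
    have hact : ∀ n, n₀ ≤ n →
        ((b.1, (List.range (n - b.1)).map b.2) : ℕ × List Bool) ∈ actF n ∧
        ((b'.1, (List.range (n - b'.1)).map b'.2) : ℕ × List Bool) ∈ actF n := by
      intro n hn
      constructor <;> (rw [mem_actF]; simp; omega)
    constructor
    · have hmem1 := hxb' b n₀ hb1
      have hmem2 := hxb' b' n₀ hb'1
      have hdisj := ((hseq n₀).2.2.2 _ (hact n₀ le_rfl).1 _ (hact n₀ le_rfl).2
        (hnd0 n₀ le_rfl)).2
      intro hEq
      exact Set.disjoint_left.1 hdisj hmem1 (hEq ▸ hmem2)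
    · intro k
      set n := max n₀ (k+1) with hn
      have hb1n : b.1 ≤ n := le_trans hb1 (le_max_left _ _)
      have hb'1n : b'.1 ≤ n := le_trans hb'1 (le_max_left _ _)
      have hmem1 := hxb' b n hb1n
      have hmem2 := hxb' b' n hb'1n
      have hprod := ((hseq n).2.2.2 _ (hact n (le_max_left _ _)).1 _
        (hact n (le_max_left _ _)).2 (hnd0 n (le_max_left _ _))).1
      have hin : (xb b, xb b') ∈ D n := hprod (Set.mk_mem_prod hmem1 hmem2)
      simp only [hD, Set.mem_iInter, Finset.mem_range] at hin
      exact hin k (by omega)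
  refine ⟨xb, ?_, ?_, fun b b' hne k => (hkey b b' hne).2 k⟩
  · intro m ω
    have h := hxb (m, ω) 0
    have hseed := (hseq m).2.2.1
    apply hseed
    simpa [hnd] using h
  · intro b b' hEq
    by_contra hne
    exact (hkey b b' hne).1 hEq

end scheme

/-- If a TDS is mean sensitive and contains a mean proximal pair consisting of a
transitive point `q` and a fixed point `p`, then it is densely mean Li-Yorke chaotic. -/
theorem densely_mean_LiYorke_chaotic_of_fixed_point
    {X : Type*} [MetricSpace X] [CompactSpace X] (T : X → X) (hT : Continuous T)
    (hsens : MeanSensitive T) (q p : X)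
    (hq : Dense (Set.range fun n : ℕ => T^[n] q))
    (hp : T p = p)
    (hqp : MeanProximalPair T q p) :
    ∃ η > (0 : ℝ), ∃ K : Set X,
      Dense K ∧ ¬ K.Countable ∧ MeanLiYorkeSetMod T η K := by
  classical
  obtain ⟨δ, hδ, hsens'⟩ := hsens
  set η := δ/2 with hη
  have hηpos : 0 < η := by simp only [hη]; linarith
  -- X is perfect
  have hperf : ∀ (x : X) (ε : ℝ), 0 < ε → ∃ y, y ∈ ball x ε ∧ y ≠ x := by
    intro x ε hε
    obtain ⟨y, hy, hlim⟩ := hsens' x ε hε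
    refine ⟨y, hy, ?_⟩
    rintro rfl
    have h0 : birkhoffAvg T y y = fun _ => (0:ℝ) :=
      funext fun N => by simp [birkhoffAvg]
    rw [h0, limsup_const] at hlim
    linarith
  -- approximation by the orbit of q
  have htr : ∀ (u : X) (ε : ℝ), 0 < ε → ∃ n : ℕ, dist (T^[n] q) u < ε := by
    intro u ε hε
    obtain ⟨b, hb, hd⟩ := Metric.mem_closure_iff.1 (hq u) ε hε
    obtain ⟨n, rfl⟩ := hb
    exact ⟨n, by rwa [dist_comm]⟩
  have hfr := freq_of_liminf_eq_zero T hqp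
  have hshift := shift_freq T hp hfr
  -- the two families of dense open sets
  set O1 : ℕ → ℕ → Set (X × X) := fun m M =>
    {z | ∃ N ≥ M, birkhoffAvg T z.1 z.2 N < 1/((m:ℝ)+1)} with hO1
  set O2 : ℕ → ℕ → Set (X × X) := fun m M =>
    {z | ∃ N ≥ M, η - 1/((m:ℝ)+1) < birkhoffAvg T z.1 z.2 N} with hO2
  have hopen1 : ∀ m M, IsOpen (O1 m M) := by
    intro m M
    have heq : O1 m M = ⋃ N, ⋃ (_ : N ≥ M),
        (fun z : X × X => birkhoffAvg T z.1 z.2 N) ⁻¹' (Set.Iio (1/((m:ℝ)+1))) := by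
      ext z; simp [hO1]
    rw [heq]
    exact isOpen_iUnion fun N => isOpen_iUnion fun _ =>
      isOpen_Iio.preimage (bA_cont hT N)
  have hopen2 : ∀ m M, IsOpen (O2 m M) := by
    intro m M
    have heq : O2 m M = ⋃ N, ⋃ (_ : N ≥ M),
        (fun z : X × X => birkhoffAvg T z.1 z.2 N) ⁻¹' (Set.Ioi (η - 1/((m:ℝ)+1))) := by
      ext z; simp [hO2]
    rw [heq]
    exact isOpen_iUnion fun N => isOpen_iUnion fun _ =>
      isOpen_Ioi.preimage (bA_cont hT N)
  have hdense1 : ∀ m M, Dense (O1 m M) := by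
    intro m M
    rw [Metric.dense_iff]
    intro z ε hε
    obtain ⟨n, hn⟩ := htr z.1 ε hε
    obtain ⟨m', hm'⟩ := htr z.2 ε hε
    obtain ⟨N, hN, hlt⟩ := hshift n m' (1/((m:ℝ)+1)) (by positivity) M
    refine ⟨(T^[n] q, T^[m'] q), ?_, ⟨N, hN, hlt⟩⟩
    rw [mem_ball, Prod.dist_eq]
    exact max_lt hn hm'
  have hdense2 : ∀ m M, Dense (O2 m M) := by
    intro m M
    rw [Metric.dense_iff]
    intro z ε hε
    obtain ⟨n, hn⟩ := htr z.1 (ε/2) (by linarith)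
    obtain ⟨m', hm'⟩ := htr z.2 (ε/2) (by linarith)
    have hm1pos : (0:ℝ) < 1/((m:ℝ)+1) := by positivity
    by_cases hcase : η ≤ limsup (birkhoffAvg T (T^[n] q) (T^[m'] q)) atTop
    · have hc : η - 1/((m:ℝ)+1) < limsup (birkhoffAvg T (T^[n] q) (T^[m'] q)) atTop := by
        linarith
      obtain ⟨N, hN, hlt⟩ := freq_of_lt_limsup T hc M
      refine ⟨(T^[n] q, T^[m'] q), ?_, ⟨N, hN, hlt⟩⟩
      rw [mem_ball, Prod.dist_eq]
      exact max_lt (by linarith) (by linarith)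
    · push_neg at hcase
      obtain ⟨y, hy, hylim⟩ := hsens' (T^[m'] q) (ε/2) (by linarith)
      rw [mem_ball] at hy
      have htri := limsup_bA_triangle T (T^[m'] q) (T^[n] q) y
      have hsymm : birkhoffAvg T (T^[m'] q) (T^[n] q)
          = birkhoffAvg T (T^[n] q) (T^[m'] q) := funext fun N => bA_symm T _ _ N
      rw [hsymm] at htri
      have hc : η - 1/((m:ℝ)+1) < limsup (birkhoffAvg T (T^[n] q) y) atTop := by
        have h1 : δ < limsup (birkhoffAvg T (T^[n] q) (T^[m'] q)) atTop
            + limsup (birkhoffAvg T (T^[n] q) y) atTop := lt_of_lt_of_le hylim htri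
        simp only [hη] at hcase h1 ⊢
        linarith
      obtain ⟨N, hN, hlt⟩ := freq_of_lt_limsup T hc M
      refine ⟨(T^[n] q, y), ?_, ⟨N, hN, hlt⟩⟩
      rw [mem_ball, Prod.dist_eq]
      apply max_lt (by linarith)
      calc dist y z.2 ≤ dist y (T^[m'] q) + dist (T^[m'] q) z.2 := dist_triangle _ _ _
        _ < ε := by linarith
  -- the enumeration of dense open sets
  set W : ℕ → Set (X × X) := fun k =>
    if k % 2 = 0 then O1 (Nat.unpair (k/2)).1 (Nat.unpair (k/2)).2
    else O2 (Nat.unpair (k/2)).1 (Nat.unpair (k/2)).2 with hW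
  have hWo : ∀ k, IsOpen (W k) := by
    intro k
    by_cases h : k % 2 = 0 <;> simp only [hW, h, if_true, if_false, reduceIte]
    · exact hopen1 _ _
    · exact hopen2 _ _
  have hWd : ∀ k, Dense (W k) := by
    intro k
    by_cases h : k % 2 = 0 <;> simp only [hW, h, if_true, if_false, reduceIte]
    · exact hdense1 _ _
    · exact hdense2 _ _
  have hWs : ∀ k (a b : X), (a, b) ∈ W k → (b, a) ∈ W k := by
    intro k a b hab
    by_cases h : k % 2 = 0 <;>
      simp only [hW, h, if_true, if_false, reduceIte, hO1, hO2, Set.mem_setOf_eq] at hab ⊢ <;>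
      obtain ⟨N, hN, hlt⟩ := hab <;>
      exact ⟨N, hN, by rwa [bA_symm]⟩
  have hW1 : ∀ m M, ∃ k, W k = O1 m M := by
    intro m M
    refine ⟨2 * Nat.pair m M, ?_⟩
    have h1 : (2 * Nat.pair m M) % 2 = 0 := by omega
    have h2 : (2 * Nat.pair m M) / 2 = Nat.pair m M := by omega
    simp [hW, h1, h2, Nat.unpair_pair]
  have hW2 : ∀ m M, ∃ k, W k = O2 m M := by
    intro m M
    refine ⟨2 * Nat.pair m M + 1, ?_⟩
    have h1 : (2 * Nat.pair m M + 1) % 2 ≠ 0 := by omega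
    have h2 : (2 * Nat.pair m M + 1) / 2 = Nat.pair m M := by omega
    simp [hW, h1, h2, Nat.unpair_pair]
  -- basic open sets
  have : Nonempty X := ⟨p⟩
  obtain ⟨d, hd⟩ := TopologicalSpace.exists_dense_seq X
  set V : ℕ → Set X := fun j =>
    ball (d (Nat.unpair j).1) (1/(((Nat.unpair j).2 : ℝ)+1)) with hV
  obtain ⟨xb, hxbV, hxbinj, hxbW⟩ := exists_scheme hperf W hWo hWd hWs V
    (fun j => isOpen_ball) (fun j => ⟨_, mem_ball_self (by positivity)⟩)
  refine ⟨η, hηpos, Set.range xb, ?_, ?_, ?_⟩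
  · -- dense
    rw [Metric.dense_iff]
    intro x ε hε
    obtain ⟨i, hi⟩ := hd.exists_dist_lt x (show (0:ℝ) < ε/2 by linarith)
    obtain ⟨j, hj⟩ := exists_nat_one_div_lt (show (0:ℝ) < ε/2 by linarith)
    set pt := xb (Nat.pair i j, fun _ => false) with hpt
    have hptV : pt ∈ V (Nat.pair i j) := hxbV _ _
    rw [hV] at hptV
    simp only [Nat.unpair_pair] at hptV
    rw [mem_ball] at hptV
    refine ⟨pt, ?_, ⟨_, rfl⟩⟩
    rw [mem_ball]
    calc dist pt x ≤ dist pt (d i) + dist (d i) x := dist_triangle _ _ _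
      _ < 1/((j:ℝ)+1) + ε/2 := by
          rw [dist_comm (d i) x]; exact add_lt_add hptV hi
      _ < ε/2 + ε/2 := by linarith
      _ = ε := by ring
  · -- uncountable
    intro hK
    have hinj0 : Function.Injective (fun ω : ℕ → Bool => xb (0, ω)) := by
      intro ω ω' h
      have := hxbinj h
      exact congrArg Prod.snd this
    have hsub : Set.range (fun ω : ℕ → Bool => xb (0, ω)) ⊆ Set.range xb := by
      rintro _ ⟨ω, rfl⟩; exact ⟨_, rfl⟩
    have hcr : (Set.range (fun ω : ℕ → Bool => xb (0, ω))).Countable := hK.mono hsub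
    have hcount : Countable (ℕ → Bool) := by
      have e := Equiv.ofInjective _ hinj0
      have : Countable (Set.range (fun ω : ℕ → Bool => xb (0, ω))) :=
        Set.countable_coe_iff.2 hcr
      exact Countable.of_equiv _ e.symm
    have h2 : Countable (Set ℕ) :=
      Countable.of_equiv _ (Equiv.arrowCongr (Equiv.refl ℕ) (Equiv.propEquivBool)).symm
    obtain ⟨f, hf⟩ := (countable_iff_exists_injective (Set ℕ)).1 h2
    exact Function.cantor_injective f hf
  · -- mean Li-Yorke set
    rintro x ⟨b, rfl⟩ y ⟨b', rfl⟩ hxy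
    have hbb' : b ≠ b' := fun h => hxy (congrArg xb h)
    have hWk := hxbW b b' hbb'
    constructor
    · apply liminf_eq_zero_of_freq T
      intro ε hε M
      obtain ⟨m, hm⟩ := exists_nat_one_div_lt hε
      obtain ⟨k, hk⟩ := hW1 m M
      have hmem := hWk k
      rw [hk, hO1] at hmem
      obtain ⟨N, hN, hlt⟩ := hmem
      exact ⟨N, hN, lt_trans hlt hm⟩
    · apply le_limsup_of_freq T
      intro ε hε M
      obtain ⟨m, hm⟩ := exists_nat_one_div_lt hε
      obtain ⟨k, hk⟩ := hW2 m M
      have hmem := hWk k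
      rw [hk, hO2] at hmem
      obtain ⟨N, hN, hlt⟩ := hmem
      refine ⟨N, hN, by linarith⟩
end
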